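/- arXiv:1610.09065 — 5 statements merged into one kernel-verified Lean document; each statement's English description precedes it below -/
import Mathlib

section
/- Let P(x) = a_0 + a_1 x + … + a_n x^n be a polynomial with real coefficients with a_0 ≠ 0 and a_n ≠ 0, and suppose 2m consecutive coefficients of P vanish for some integer m ≥ 1 (i.e. there is an index j with a_{j+1} = a_{j+2} = … = a_{j+2m} = 0). Then P has at least 2m non-real complex zeros, counted with multiplicity. -/
open MvPolynomial Finset

/-- The linear form `a*x + b*y` as a binary polynomial over `ℂ`. -/
noncomputable def lform (a b : ℂ) : MvPolynomial (Fin 2) ℂ := C a * X 0 + C b * X 1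

/-- The `K`-rank of a binary form `p`: the least `r` such that `p` is a `K`-linear
combination of `r` d-th powers of linear forms with coefficients in `K`. -/
noncomputable def rankIn (K : Subfield ℂ) (d : ℕ) (p : MvPolynomial (Fin 2) ℂ) : ℕ :=
  sInf {r : ℕ | ∃ lam a b : Fin r → ℂ, (∀ j, lam j ∈ K ∧ a j ∈ K ∧ b j ∈ K) ∧
    p = ∑ j, C (lam j) * lform (a j) (b j) ^ d}

/-- The Waring rank `L_ℂ` of a binary form. -/
noncomputable def rankC (d : ℕ) (p : MvPolynomial (Fin 2) ℂ) : ℕ :=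
  sInf {r : ℕ | ∃ lam a b : Fin r → ℂ, p = ∑ j, C (lam j) * lform (a j) (b j) ^ d}

/-- Single partial derivative as a plain function. -/
noncomputable def pd (i : Fin 2) (p : MvPolynomial (Fin 2) ℂ) : MvPolynomial (Fin 2) ℂ :=
  pderiv i p

/-- `apolar h p = h(D) p`, the differential operator of `h` applied to `p`. -/
noncomputable def apolar (h p : MvPolynomial (Fin 2) ℂ) : MvPolynomial (Fin 2) ℂ :=
  ∑ m ∈ h.support, h.coeff m • ((pd 0)^[m 0] ((pd 1)^[m 1] p))

/-- The subfield of `ℂ` generated by a subfield `K` and a set `S`. -/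
noncomputable def adj (K : Subfield ℂ) (S : Set ℂ) : Subfield ℂ := Subfield.closure (↑K ∪ S)

/-- `z` and `w` are conjugate over `K` in `K(s)`: `z = a + b s`, `w = a - b s` with `a, b ∈ K`. -/
def conjPair (K : Subfield ℂ) (s z w : ℂ) : Prop :=
  ∃ a b : ℂ, a ∈ K ∧ b ∈ K ∧ z = a + b * s ∧ w = a - b * s

noncomputable def lformR (a b : ℝ) : MvPolynomial (Fin 2) ℝ := C a * X 0 + C b * X 1

noncomputable def rankR (d : ℕ) (p : MvPolynomial (Fin 2) ℝ) : ℕ :=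
  sInf {r : ℕ | ∃ lam a b : Fin r → ℝ, p = ∑ j, C (lam j) * lformR (a j) (b j) ^ d}


open Polynomial Multiset in
private lemma sum_count_eq_card_filter {α : Type*} [DecidableEq α] (U : Finset α) (N : Multiset α) :
    ∑ x ∈ U, N.count x = (N.filter (· ∈ U)).card := by
  classical
  induction U using Finset.induction_on with
  | empty =>
      rw [show (N.filter (· ∈ (∅ : Finset α))) = 0 from
        Multiset.filter_eq_nil.2 (fun x _ h => by simp at h)]
      simp
  | @insert a U ha ih =>
      rw [Finset.sum_insert ha, ih]
      have h1 : N.filter (· = a) + N.filter (· ∈ U) =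
          N.filter (fun x => x = a ∨ x ∈ U) + N.filter (fun x => x = a ∧ x ∈ U) :=
        Multiset.filter_add_filter _ _ N
      have h2 : N.filter (fun x => x = a ∧ x ∈ U) = 0 :=
        Multiset.filter_eq_nil.2 fun x _ hx => ha (hx.1 ▸ hx.2)
      have h3 : N.filter (fun x => x = a ∨ x ∈ U) = N.filter (· ∈ insert a U) :=
        Multiset.filter_congr fun x _ => by simp [Finset.mem_insert]
      have h4 : (N.filter (· = a)).card = N.count a := by
        rw [Multiset.filter_eq', Multiset.card_replicate]
      have := congrArg Multiset.card h1
      rw [Multiset.card_add, Multiset.card_add, h2, h3, h4] at this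
      simp only [Multiset.card_zero, add_zero] at this
      exact this

open Polynomial Multiset in
private lemma sum_count_le_card_filter {α : Type*} [DecidableEq α] (q : α → Prop) [DecidablePred q]
    (U : Finset α) (M : Multiset α) (h : ∀ x ∈ U, q x) :
    ∑ x ∈ U, M.count x ≤ (M.filter q).card := by
  classical
  have : ∑ x ∈ U, M.count x = ∑ x ∈ U, (M.filter q).count x :=
    Finset.sum_congr rfl fun x hx => (Multiset.count_filter_of_pos (h x hx)).symm
  rw [this, sum_count_eq_card_filter]
  exact Multiset.card_le_card (Multiset.filter_le _ _)

open Polynomial Multiset in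
private lemma rolle_filter (q : ℝ → Prop) [DecidablePred q]
    (hq : ∀ ⦃x z y : ℝ⦄, q x → q y → x < z → z < y → q z)
    (p : Polynomial ℝ) (hp : p ≠ 0) :
    Multiset.card (p.roots.filter q) ≤
      Multiset.card ((Polynomial.derivative p).roots.filter q) + 1 := by
  classical
  rcases eq_or_ne (Polynomial.derivative p) 0 with hp' | hp'
  · rw [Polynomial.eq_C_of_derivative_eq_zero hp', Polynomial.roots_C]
    simp
  set S := p.roots.toFinset.filter q with hS
  set T := (Polynomial.derivative p).roots.toFinset.filter q with hT
  have hST : S.card ≤ (T \ S).card + 1 := by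
    refine Finset.card_le_diff_of_interleaved fun x hx y hy hxy _ => ?_
    rw [hS, Finset.mem_filter, Multiset.mem_toFinset, Polynomial.mem_roots hp] at hx hy
    obtain ⟨z, hz1, hz2⟩ := exists_deriv_eq_zero hxy p.continuousOn (hx.1.trans hy.1.symm)
    refine ⟨z, ?_, hz1.1, hz1.2⟩
    rw [hT, Finset.mem_filter, Multiset.mem_toFinset, Polynomial.mem_roots hp']
    exact ⟨by rwa [Polynomial.IsRoot, ← p.deriv], hq hx.2 hy.2 hz1.1 hz1.2⟩
  have hfin : (p.roots.filter q).toFinset = S := by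
    rw [hS, Multiset.toFinset_filter]
  calc Multiset.card (p.roots.filter q)
      = ∑ x ∈ S, (p.roots.filter q).count x := by
        rw [← hfin, Multiset.toFinset_sum_count_eq]
    _ = ∑ x ∈ S, p.roots.count x := by
        refine Finset.sum_congr rfl fun x hx => ?_
        exact Multiset.count_filter_of_pos (Finset.mem_filter.1 hx).2
    _ = ∑ x ∈ S, (p.roots.count x - 1 + 1) := by
        refine Finset.sum_congr rfl fun x hx => ?_
        have : x ∈ p.roots := Multiset.mem_toFinset.1 (Finset.mem_filter.1 hx).1
        exact (tsub_add_cancel_of_le (Nat.succ_le_iff.2 (Multiset.count_pos.2 this))).symm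
    _ = (∑ x ∈ S, (p.roots.count x - 1)) + S.card := by
        rw [Finset.sum_add_distrib, Finset.card_eq_sum_ones]
    _ ≤ (∑ x ∈ S, (Polynomial.derivative p).roots.count x) + ((T \ S).card + 1) := by
        refine add_le_add (Finset.sum_le_sum fun x _ => ?_) hST
        rw [Polynomial.count_roots, Polynomial.count_roots]
        exact Polynomial.rootMultiplicity_sub_one_le_derivative_rootMultiplicity_of_ne_zero p x hp'
    _ ≤ (∑ x ∈ S, (Polynomial.derivative p).roots.count x) +
          ((∑ x ∈ T \ S, (Polynomial.derivative p).roots.count x) + 1) := by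
        refine add_le_add_right (add_le_add_left ?_ 1) _
        rw [Finset.card_eq_sum_ones]
        refine Finset.sum_le_sum fun x hx => ?_
        have : x ∈ (Polynomial.derivative p).roots :=
          Multiset.mem_toFinset.1 (Finset.mem_filter.1 (Finset.mem_sdiff.1 hx).1).1
        exact Nat.succ_le_iff.2 (Multiset.count_pos.2 this)
    _ ≤ Multiset.card ((Polynomial.derivative p).roots.filter q) + 1 := by
        rw [← add_assoc, ← Finset.sum_union Finset.disjoint_sdiff]
        refine add_le_add_left ?_ 1
        refine sum_count_le_card_filter q _ _ fun x hx => ?_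
        rcases Finset.mem_union.1 hx with h | h
        · exact (Finset.mem_filter.1 h).2
        · exact (Finset.mem_filter.1 (Finset.mem_sdiff.1 h).1).2

open Multiset in
private lemma card_filter_ne_split {α : Type*} (g : α → ℝ) (s : Multiset α) :
    Multiset.card (s.filter (fun a => g a ≠ 0)) =
      Multiset.card (s.filter (fun a => 0 < g a)) +
      Multiset.card (s.filter (fun a => g a < 0)) := by
  classical
  have h1 := Multiset.filter_add_filter (fun a => 0 < g a) (fun a => g a < 0) s
  have h2 : s.filter (fun a => 0 < g a ∧ g a < 0) = 0 :=
    Multiset.filter_eq_nil.2 fun x _ h => absurd (h.1.trans h.2) (lt_irrefl 0)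
  have h3 : s.filter (fun a => 0 < g a ∨ g a < 0) = s.filter (fun a => g a ≠ 0) :=
    Multiset.filter_congr fun x _ => by
      constructor
      · rintro (h | h) <;> [exact h.ne'; exact h.ne]
      · intro h; rcases h.lt_or_gt with h' | h'
        · exact Or.inr h'
        · exact Or.inl h'
  have := congrArg Multiset.card h1
  rw [Multiset.card_add, Multiset.card_add, h2, h3] at this
  simpa using this.symm

open Polynomial in
private lemma real_roots_card_key (p : Polynomial ℝ) (hp : p ≠ 0) :
    Multiset.card p.roots +
      Multiset.card ((p.map (algebraMap ℝ ℂ)).roots.filter (fun z => z.im ≠ 0)) = p.natDegree ∧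
    Even (Multiset.card ((p.map (algebraMap ℝ ℂ)).roots.filter (fun z => z.im ≠ 0))) := by
  classical
  set q := p.map (algebraMap ℝ ℂ) with hq
  have hq0 : q ≠ 0 := by
    rw [hq, Ne, Polynomial.map_eq_zero_iff (algebraMap ℝ ℂ).injective]
    exact hp
  -- total count
  have htot : Multiset.card q.roots = p.natDegree := by
    rw [Polynomial.splits_iff_card_roots.1 (IsAlgClosed.splits q),
      Polynomial.natDegree_map]
  -- real part count
  have hreal : q.roots.filter (fun z => z.im = 0) = p.roots.map (algebraMap ℝ ℂ) := by
    ext z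
    by_cases hz : z.im = 0
    · have hzre : ((z.re : ℝ) : ℂ) = z := Complex.ext (by simp) (by simp [hz])
      have e1 : Multiset.count ((algebraMap ℝ ℂ) z.re)
          (Multiset.map (⇑(algebraMap ℝ ℂ)) p.roots) = Multiset.count z.re p.roots :=
        Multiset.count_map_eq_count' _ _ (algebraMap ℝ ℂ).injective _
      rw [Multiset.count_filter_of_pos (p := fun z : ℂ => z.im = 0) hz, ← hzre,
        show ((z.re : ℝ) : ℂ) = (algebraMap ℝ ℂ) z.re from rfl, e1,
        Polynomial.count_roots, Polynomial.count_roots, hq]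
      exact (Polynomial.eq_rootMultiplicity_map (algebraMap ℝ ℂ).injective z.re).symm
    · rw [Multiset.count_filter_of_neg (p := fun z : ℂ => z.im = 0) hz, eq_comm]
      rw [Multiset.count_eq_zero]
      intro hmem
      obtain ⟨r, _, hr⟩ := Multiset.mem_map.1 hmem
      exact hz (hr ▸ by simp)
  have hsplitcard : Multiset.card (q.roots.filter (fun z => z.im = 0)) +
      Multiset.card (q.roots.filter (fun z => z.im ≠ 0)) = Multiset.card q.roots := by
    rw [← Multiset.card_add]
    congr 1
    have := Multiset.filter_add_not (fun z : ℂ => z.im = 0) q.roots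
    rwa [show (q.roots.filter (fun a => ¬a.im = 0)) = q.roots.filter (fun z => z.im ≠ 0) from
      rfl] at this
  have hcard1 : Multiset.card (q.roots.filter (fun z => z.im = 0)) = Multiset.card p.roots := by
    rw [hreal, Multiset.card_map]
  constructor
  · rw [← hcard1, hsplitcard, htot]
  -- evenness
  have hconj : q.roots.map (starRingEnd ℂ) = q.roots := by
    have hsplit : (q.map (starRingEnd ℂ)).roots = q.roots.map (starRingEnd ℂ) :=
      Polynomial.Splits.roots_map
        (IsAlgClosed.splits q : Polynomial.Splits q) (starRingEnd ℂ)
    have hmapeq : q.map (starRingEnd ℂ) = q := by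
      rw [hq, Polynomial.map_map]
      congr 1
      exact RingHom.ext fun r => Complex.conj_ofReal r
    rw [← hsplit, hmapeq]
  have hpm : Multiset.card (q.roots.filter (fun z => 0 < z.im)) =
      Multiset.card (q.roots.filter (fun z => z.im < 0)) := by
    conv_lhs => rw [← hconj]
    rw [Multiset.filter_map]
    rw [Multiset.card_map]
    congr 1
    refine Multiset.filter_congr fun x _ => ?_
    simp only [Function.comp_apply, Complex.conj_im]
    constructor
    · intro h; linarith
    · intro h; linarith
  rw [card_filter_ne_split Complex.im q.roots, hpm, ← two_mul]
  exact even_two_mul _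

open Multiset in
private lemma card_filter_ne_split_real (s : Multiset ℝ) :
    Multiset.card (s.filter (fun a => a ≠ 0)) =
      Multiset.card (s.filter (fun a => 0 < a)) +
      Multiset.card (s.filter (fun a => a < 0)) := by
  simpa using card_filter_ne_split (fun x : ℝ => x) s

private lemma card_roots_le_iterate (p : Polynomial ℝ) (k : ℕ) :
    Multiset.card p.roots ≤ Multiset.card ((Polynomial.derivative^[k]) p).roots + k := by
  induction k with
  | zero => simp
  | succ k ih =>
      refine ih.trans ?_
      rw [Function.iterate_succ_apply']
      have := Polynomial.card_roots_le_derivative (Polynomial.derivative^[k] p)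
      omega


/-- **Descartes-type gap theorem.** If `2m` consecutive coefficients of a real polynomial
vanish (strictly inside the coefficient range), it has at least `2m` non-real zeros,
counted with multiplicity. -/
theorem gap_nonreal_roots (P : Polynomial ℝ) (n m j : ℕ) (hm : 1 ≤ m)
    (hn : P.natDegree = n) (h0 : P.coeff 0 ≠ 0) (hnn : P.coeff n ≠ 0)
    (hjm : j + 2 * m < n)
    (hvan : ∀ t, 1 ≤ t → t ≤ 2 * m → P.coeff (j + t) = 0) :
    2 * m ≤ Multiset.card ((P.map (algebraMap ℝ ℂ)).roots.filter fun z => z.im ≠ 0) := by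
  classical
  have hP : P ≠ 0 := fun h => h0 (by simp [h])
  set j₀ := Nat.findGreatest (fun i => P.coeff i ≠ 0) j with hj₀def
  have hj₀le : j₀ ≤ j := Nat.findGreatest_le j
  have hj₀ : P.coeff j₀ ≠ 0 := by
    have := Nat.findGreatest_spec (P := fun i => P.coeff i ≠ 0) (Nat.zero_le j) h0
    rw [← hj₀def] at this
    exact this
  have hzero : ∀ i, j₀ < i → i ≤ j + 2 * m → P.coeff i = 0 := by
    intro i h1 h2
    by_cases hij : i ≤ j
    · have := Nat.findGreatest_is_greatest (P := fun i => P.coeff i ≠ 0)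
        (hj₀def ▸ h1) hij
      exact not_not.1 this
    · push_neg at hij
      have := hvan (i - j) (by omega) (by omega)
      rwa [show j + (i - j) = i by omega] at this
  set A := Polynomial.derivative^[j₀] P with hA
  set B := Polynomial.derivative^[j₀ + 1] P with hBdef
  have hBA : B = Polynomial.derivative A := by
    rw [hA, hBdef, Function.iterate_succ_apply']
  have hj₀n : j₀ + 2 * m + 1 ≤ n := by omega
  have coeffA0 : A.coeff 0 ≠ 0 := by
    rw [hA, Polynomial.coeff_iterate_derivative, nsmul_eq_mul]
    exact mul_ne_zero
      (Nat.cast_ne_zero.2 (fun h => by have := Nat.descFactorial_eq_zero_iff_lt.1 h; omega))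
      (by simpa using hj₀)
  have hAne : A ≠ 0 := fun h => coeffA0 (by rw [h, Polynomial.coeff_zero])
  have coeffAtop : A.coeff (n - j₀) ≠ 0 := by
    rw [hA, Polynomial.coeff_iterate_derivative, nsmul_eq_mul,
      show n - j₀ + j₀ = n by omega]
    exact mul_ne_zero (Nat.cast_ne_zero.2 (fun h => by have := Nat.descFactorial_eq_zero_iff_lt.1 h; omega)) hnn
  have degA : A.natDegree = n - j₀ :=
    le_antisymm (hn ▸ Polynomial.natDegree_iterate_derivative P j₀)
      (Polynomial.le_natDegree_of_ne_zero coeffAtop)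
  have coeffBtop : B.coeff (n - (j₀ + 1)) ≠ 0 := by
    rw [hBdef, Polynomial.coeff_iterate_derivative, nsmul_eq_mul,
      show n - (j₀ + 1) + (j₀ + 1) = n by omega]
    exact mul_ne_zero (Nat.cast_ne_zero.2 (fun h => by have := Nat.descFactorial_eq_zero_iff_lt.1 h; omega)) hnn
  have hBne : B ≠ 0 := fun h => coeffBtop (by rw [h, Polynomial.coeff_zero])
  have degB : B.natDegree = n - (j₀ + 1) :=
    le_antisymm (hn ▸ Polynomial.natDegree_iterate_derivative P (j₀ + 1))
      (Polynomial.le_natDegree_of_ne_zero coeffBtop)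
  have coeffB : ∀ t, t < 2 * m → B.coeff t = 0 := by
    intro t ht
    rw [hBdef, Polynomial.coeff_iterate_derivative,
      hzero (t + (j₀ + 1)) (by omega) (by omega), smul_zero]
  have hdvd : (Polynomial.X : Polynomial ℝ) ^ (2 * m) ∣ B :=
    Polynomial.X_pow_dvd_iff.2 fun d hd => coeffB d hd
  have hmult : 2 * m ≤ B.roots.count 0 := by
    rw [Polynomial.count_roots, Polynomial.le_rootMultiplicity_iff hBne]
    simpa using hdvd
  have hBsplit : Multiset.card (B.roots.filter (fun x => x ≠ 0)) + B.roots.count 0 =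
      Multiset.card B.roots := by
    have h := Multiset.filter_add_not (fun x : ℝ => x ≠ 0) B.roots
    have h2 : B.roots.filter (fun x => ¬x ≠ 0) = B.roots.filter (fun x => x = 0) :=
      Multiset.filter_congr fun x _ => not_not
    rw [h2] at h
    have h3 := congrArg Multiset.card h
    rwa [Multiset.card_add, Multiset.filter_eq', Multiset.card_replicate] at h3
  have hcardBroots : Multiset.card B.roots ≤ n - (j₀ + 1) := degB ▸ Polynomial.card_roots' B
  have hsplitB := card_filter_ne_split_real B.roots
  have hpos : Multiset.card (A.roots.filter (fun a => 0 < a)) ≤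
      Multiset.card (B.roots.filter (fun a => 0 < a)) + 1 := by
    rw [hBA]
    exact rolle_filter _ (fun x z y hx _ h1 _ => hx.trans h1) A hAne
  have hneg : Multiset.card (A.roots.filter (fun a => a < 0)) ≤
      Multiset.card (B.roots.filter (fun a => a < 0)) + 1 := by
    rw [hBA]
    exact rolle_filter _ (fun x z y _ hy _ h2 => h2.trans hy) A hAne
  have hAroots0 : A.roots.filter (fun a => a ≠ 0) = A.roots := by
    refine Multiset.filter_eq_self.2 fun x hx => ?_
    rintro rfl
    exact coeffA0 (by
      rw [Polynomial.coeff_zero_eq_eval_zero]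
      exact Polynomial.isRoot_of_mem_roots hx)
  have hsplitA := card_filter_ne_split_real A.roots
  rw [hAroots0] at hsplitA
  obtain ⟨hkeyA, hevenA⟩ := real_roots_card_key A hAne
  obtain ⟨hkeyP, _⟩ := real_roots_card_key P hP
  obtain ⟨c, hc⟩ := hevenA
  have hchain : Multiset.card P.roots ≤ Multiset.card A.roots + j₀ := by
    rw [hA]
    exact card_roots_le_iterate P j₀
  rw [degA] at hkeyA
  rw [hn] at hkeyP
  omega
end

section
/- Let K ⊆ ℂ be a field and let p(x,y) ∈ K[x,y] be a nonzero binary form of degree d ≥ 3 which is not a d-th power of a linear form, and suppose there exist λ_1, λ_2, α_1, α_2, β_1, β_2 ∈ ℂ with p(x,y) = λ_1(α_1 x + β_1 y)^d + λ_2(α_2 x + β_2 y)^d, this representation being honest, and L_K(p) > 2. Then there exists u ∈ K with √u ∉ K such that L_{K(√u)}(p) = 2, and the two summands are mapped to one another by the nontrivial K-automorphism of K(√u) (they are conjugates of each other over K in K(√u)). -/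
open MvPolynomial Finset

section Helpers

open Finsupp in
lemma mono_eq (m : Fin 2 →₀ ℕ) : m = Finsupp.single 0 (m 0) + Finsupp.single 1 (m 1) := by
  ext i; fin_cases i <;> simp [Finsupp.single_apply]

lemma degree_fin2 (m : Fin 2 →₀ ℕ) : m.degree = m 0 + m 1 := by
  rw [Finsupp.degree_apply, Finset.sum_subset (Finset.subset_univ m.support)]
  · rw [show (Finset.univ : Finset (Fin 2)) = {0, 1} by decide]
    simp
  · intro x _ hx
    simpa using Finsupp.notMem_support_iff.1 hx

lemma cross_prop (x0 x1 x2 y0 y1 y2 : ℂ)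
    (h01 : x0*y1 - x1*y0 = 0) (h02 : x0*y2 - x2*y0 = 0) (h12 : x1*y2 - x2*y1 = 0)
    (hx : ¬(x0 = 0 ∧ x1 = 0 ∧ x2 = 0)) :
    ∃ c : ℂ, y0 = c*x0 ∧ y1 = c*x1 ∧ y2 = c*x2 := by
  by_cases h0 : x0 ≠ 0
  · refine ⟨y0/x0, ?_, ?_, ?_⟩
    · rw [div_mul_eq_mul_div, eq_div_iff h0]
    · rw [div_mul_eq_mul_div, eq_div_iff h0]; linear_combination h01
    · rw [div_mul_eq_mul_div, eq_div_iff h0]; linear_combination h02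
  push_neg at h0; subst h0
  by_cases h1 : x1 ≠ 0
  · have hy0 : y0 = 0 := by
      have : x1 * y0 = 0 := by linear_combination -h01
      exact (mul_eq_zero.1 this).resolve_left h1
    refine ⟨y1/x1, by simp [hy0], ?_, ?_⟩
    · rw [div_mul_eq_mul_div, eq_div_iff h1]
    · rw [div_mul_eq_mul_div, eq_div_iff h1]; linear_combination h12
  push_neg at h1; subst h1
  have h2 : x2 ≠ 0 := fun h => hx ⟨rfl, rfl, h⟩
  have hy0 : y0 = 0 := by
    have : x2 * y0 = 0 := by linear_combination -h02
    exact (mul_eq_zero.1 this).resolve_left h2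
  have hy1 : y1 = 0 := by
    have : x2 * y1 = 0 := by linear_combination -h12
    exact (mul_eq_zero.1 this).resolve_left h2
  refine ⟨y2/x2, by simp [hy0], by simp [hy1], ?_⟩
  rw [div_mul_eq_mul_div, eq_div_iff h2]

lemma seq_zero (a1 b1 c1 : ℂ) (k : ℕ)
    (h : ∀ i ≤ k, c1 * (a1^i * b1^(k-i)) = 0) (hab : ¬(a1 = 0 ∧ b1 = 0)) : c1 = 0 := by
  by_contra hc
  have h0 := h 0 (Nat.zero_le k)
  have hk := h k le_rfl
  simp only [pow_zero, one_mul, Nat.sub_zero] at h0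
  simp only [Nat.sub_self, pow_zero, mul_one] at hk
  have hb : b1 ^ k = 0 := (mul_eq_zero.1 h0).resolve_left hc
  have ha : a1 ^ k = 0 := (mul_eq_zero.1 hk).resolve_left hc
  rcases Nat.eq_zero_or_pos k with rfl | hk'
  · simp at hb
  · exact hab ⟨pow_eq_zero_iff hk'.ne' |>.1 ha, pow_eq_zero_iff hk'.ne' |>.1 hb⟩

lemma seq_indep (a1 b1 a2 b2 c1 c2 : ℂ) (hD : a1*b2 - a2*b1 ≠ 0) (k : ℕ) (hk : 1 ≤ k)
    (h : ∀ i ≤ k, c1 * (a1^i * b1^(k-i)) + c2 * (a2^i * b2^(k-i)) = 0) :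
    c1 = 0 ∧ c2 = 0 := by
  have hab1 : ¬(a1 = 0 ∧ b1 = 0) := by rintro ⟨rfl, rfl⟩; simp at hD
  have hab2 : ¬(a2 = 0 ∧ b2 = 0) := by rintro ⟨rfl, rfl⟩; simp at hD
  have key : ∀ i ≤ k - 1, c1 * (a1^i * b1^(k-1-i)) = 0 ∧ c2 * (a2^i * b2^(k-1-i)) = 0 := by
    intro i hi
    have e1 := h i (by omega)
    have e2 := h (i+1) (by omega)
    rw [show k - i = (k - 1 - i) + 1 from by omega] at e1
    rw [show k - (i+1) = k - 1 - i from by omega] at e2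
    have e1' : b1 * (c1 * (a1^i * b1^(k-1-i))) + b2 * (c2 * (a2^i * b2^(k-1-i))) = 0 := by
      rw [pow_succ, pow_succ] at e1; linear_combination e1
    have e2' : a1 * (c1 * (a1^i * b1^(k-1-i))) + a2 * (c2 * (a2^i * b2^(k-1-i))) = 0 := by
      rw [pow_succ, pow_succ] at e2; linear_combination e2
    constructor
    · have : (a1*b2 - a2*b1) * (c1 * (a1^i * b1^(k-1-i))) = 0 := by
        linear_combination b2 * e2' - a2 * e1'
      exact (mul_eq_zero.1 this).resolve_left hD
    · have : (a1*b2 - a2*b1) * (c2 * (a2^i * b2^(k-1-i))) = 0 := by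
        linear_combination a1 * e1' - b1 * e2'
      exact (mul_eq_zero.1 this).resolve_left hD
  exact ⟨seq_zero _ _ _ _ (fun i hi => (key i hi).1) hab1,
    seq_zero _ _ _ _ (fun i hi => (key i hi).2) hab2⟩

lemma cramer2 (m11 m12 m21 m22 k1 k2 x y : ℂ) (hdet : m11*m22 - m12*m21 ≠ 0)
    (h1 : m11*x + m12*y = k1) (h2 : m21*x + m22*y = k2) :
    x = (k1*m22 - k2*m12)/(m11*m22 - m12*m21) ∧
    y = (m11*k2 - m21*k1)/(m11*m22 - m12*m21) := by
  constructor
  · rw [eq_div_iff hdet]; linear_combination m22 * h1 - m12 * h2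
  · rw [eq_div_iff hdet]; linear_combination m11 * h2 - m21 * h1

end Helpers

namespace conjPair

variable {K : Subfield ℂ} {s z w z' w' : ℂ}

lemma of_mem (hz : z ∈ K) : conjPair K s z z := ⟨z, 0, hz, K.zero_mem, by ring, by ring⟩

lemma symm (h : conjPair K s z w) : conjPair K s w z := by
  obtain ⟨a, b, ha, hb, hz, hw⟩ := h
  exact ⟨a, -b, ha, K.neg_mem hb, by rw [hw]; ring, by rw [hz]; ring⟩

lemma neg_s (h : conjPair K s z w) : conjPair K (-s) z w := by
  obtain ⟨a, b, ha, hb, hz, hw⟩ := h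
  exact ⟨a, -b, ha, K.neg_mem hb, by rw [hz]; ring, by rw [hw]; ring⟩

lemma add (h : conjPair K s z w) (h' : conjPair K s z' w') :
    conjPair K s (z + z') (w + w') := by
  obtain ⟨a, b, ha, hb, hz, hw⟩ := h
  obtain ⟨a', b', ha', hb', hz', hw'⟩ := h'
  exact ⟨a + a', b + b', K.add_mem ha ha', K.add_mem hb hb',
    by rw [hz, hz']; ring, by rw [hw, hw']; ring⟩

lemma sub (h : conjPair K s z w) (h' : conjPair K s z' w') :
    conjPair K s (z - z') (w - w') := by
  obtain ⟨a, b, ha, hb, hz, hw⟩ := h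
  obtain ⟨a', b', ha', hb', hz', hw'⟩ := h'
  exact ⟨a - a', b - b', K.sub_mem ha ha', K.sub_mem hb hb',
    by rw [hz, hz']; ring, by rw [hw, hw']; ring⟩

lemma mul (hs2 : s^2 ∈ K) (h : conjPair K s z w) (h' : conjPair K s z' w') :
    conjPair K s (z * z') (w * w') := by
  obtain ⟨a, b, ha, hb, hz, hw⟩ := h
  obtain ⟨a', b', ha', hb', hz', hw'⟩ := h'
  exact ⟨a * a' + b * b' * s^2, a * b' + b * a',
    K.add_mem (K.mul_mem ha ha') (K.mul_mem (K.mul_mem hb hb') hs2),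
    K.add_mem (K.mul_mem ha hb') (K.mul_mem hb ha'),
    by rw [hz, hz']; ring, by rw [hw, hw']; ring⟩

lemma pow (hs2 : s^2 ∈ K) (h : conjPair K s z w) (n : ℕ) :
    conjPair K s (z ^ n) (w ^ n) := by
  induction n with
  | zero => simpa using of_mem K.one_mem
  | succ n ih => rw [pow_succ, pow_succ]; exact mul hs2 ih h

lemma inv (hs2 : s^2 ∈ K) (h : conjPair K s z w) (hz : z ≠ 0) (hw : w ≠ 0) :
    conjPair K s z⁻¹ w⁻¹ := by
  obtain ⟨a, b, ha, hb, hzz, hww⟩ := h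
  have hzw : z * w = a^2 - b^2 * s^2 := by rw [hzz, hww]; ring
  have hzwK : z * w ∈ K := hzw ▸ K.sub_mem (by
      simpa [sq] using K.mul_mem ha ha)
    (K.mul_mem (by simpa [sq] using K.mul_mem hb hb) hs2)
  have hzw0 : z * w ≠ 0 := mul_ne_zero hz hw
  have h1 : z⁻¹ = w / (z*w) := by
    rw [eq_div_iff hzw0, inv_mul_cancel_left₀ hz]
  have h2 : w⁻¹ = z / (z*w) := by
    rw [eq_div_iff hzw0, mul_comm z w, inv_mul_cancel_left₀ hw]
  refine ⟨a / (z*w), -b / (z*w), K.div_mem ha hzwK, K.div_mem (K.neg_mem hb) hzwK, ?_, ?_⟩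
  · rw [h1, hww]; ring
  · rw [h2, hzz]; ring

lemma div (hs2 : s^2 ∈ K) (h : conjPair K s z w) (h' : conjPair K s z' w')
    (hz' : z' ≠ 0) (hw' : w' ≠ 0) : conjPair K s (z / z') (w / w') := by
  rw [div_eq_mul_inv, div_eq_mul_inv]
  exact h.mul hs2 (h'.inv hs2 hz' hw')

lemma mem_adj (h : conjPair K s z w) : z ∈ adj K {s} ∧ w ∈ adj K {s} := by
  obtain ⟨a, b, ha, hb, hz, hw⟩ := h
  have hK : ∀ x ∈ K, x ∈ adj K {s} := fun x hx =>
    Subfield.subset_closure (Set.mem_union_left _ hx)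
  have hsmem : s ∈ adj K {s} := Subfield.subset_closure (Set.mem_union_right _ rfl)
  constructor
  · rw [hz]; exact (adj K {s}).add_mem (hK a ha) ((adj K {s}).mul_mem (hK b hb) hsmem)
  · rw [hw]; exact (adj K {s}).sub_mem (hK a ha) ((adj K {s}).mul_mem (hK b hb) hsmem)

end conjPair

lemma adj_neg (K : Subfield ℂ) (t : ℂ) : adj K ({-t} : Set ℂ) = adj K ({t} : Set ℂ) := by
  have key : ∀ w : ℂ, adj K ({-w} : Set ℂ) ≤ adj K ({w} : Set ℂ) := by
    intro w
    unfold adj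
    rw [Subfield.closure_le]
    rintro x (hx | hx)
    · exact Subfield.subset_closure (Set.mem_union_left _ hx)
    · rw [Set.mem_singleton_iff] at hx
      rw [hx]
      exact (Subfield.closure _).neg_mem
        (Subfield.subset_closure (Set.mem_union_right _ rfl))
  refine le_antisymm (key t) ?_
  have h2 := key (-t)
  rw [neg_neg] at h2
  exact h2

lemma lform_smul (c a b : ℂ) : lform (c*a) (c*b) = C c * lform a b := by
  simp only [lform, map_mul]; ring

lemma lform_pow_eq (a b : ℂ) (d : ℕ) :
    lform a b ^ d = ∑ k ∈ range (d+1),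
      monomial (Finsupp.single 0 k + Finsupp.single 1 (d-k)) ((d.choose k : ℂ) * (a^k * b^(d-k))) := by
  rw [lform, add_pow]
  refine Finset.sum_congr rfl (fun k hk => ?_)
  have h1 : (C a * X (0:Fin 2)) ^ k = monomial (Finsupp.single 0 k) (a^k) := by
    rw [mul_pow, ← C_pow, X_pow_eq_monomial, C_mul_monomial, mul_one]
  have h2 : (C b * X (1:Fin 2)) ^ (d-k) = monomial (Finsupp.single 1 (d-k)) (b^(d-k)) := by
    rw [mul_pow, ← C_pow, X_pow_eq_monomial, C_mul_monomial, mul_one]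
  rw [h1, h2, monomial_mul, ← map_natCast (C : ℂ →+* MvPolynomial (Fin 2) ℂ) (d.choose k),
    mul_comm _ (C ((d.choose k : ℂ))), C_mul_monomial]

lemma coeff_lform_pow (a b : ℂ) (d : ℕ) (m : Fin 2 →₀ ℕ) :
    coeff m (lform a b ^ d) =
      if m 0 + m 1 = d then (d.choose (m 0) : ℂ) * (a ^ (m 0) * b ^ (m 1)) else 0 := by
  rw [lform_pow_eq, coeff_sum]
  simp only [coeff_monomial]
  by_cases h : m 0 + m 1 = d
  · rw [if_pos h, Finset.sum_eq_single (m 0)]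
    · rw [if_pos, show d - m 0 = m 1 by omega]
      ext i
      fin_cases i <;> simp [Finsupp.single_apply] <;> omega
    · intro k hk hkm
      rw [if_neg]
      intro he
      apply hkm
      have := DFunLike.congr_fun he (0 : Fin 2)
      simpa [Finsupp.single_apply] using this
    · intro hm; exact absurd (Finset.mem_range.2 (by omega)) hm
  · rw [if_neg h]
    refine Finset.sum_eq_zero (fun k hk => ?_)
    rw [if_neg]
    intro he
    have h0 := DFunLike.congr_fun he (0 : Fin 2)
    have h1 := DFunLike.congr_fun he (1 : Fin 2)
    simp [Finsupp.single_apply] at h0 h1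
    rw [Finset.mem_range] at hk
    omega

lemma sys_id (d : ℕ) (l c a b α β : ℂ) (hc : c ≠ 0) (hα : α = c*a) (hβ : β = c*b)
    (i : ℕ) (hi : i ≤ d) : (l / c^d) * (α^i * β^(d-i)) = l * (a^i * b^(d-i)) := by
  rw [hα, hβ, mul_pow, mul_pow]
  have hcc : c^i * c^(d-i) = c^d := by rw [← pow_add, Nat.add_sub_cancel' hi]
  have h : l / c^d * c^d = l := div_mul_cancel₀ l (pow_ne_zero d hc)
  rw [show c^i*a^i*(c^(d-i)*b^(d-i)) = (c^i*c^(d-i))*(a^i*b^(d-i)) from by ring, hcc,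
    ← mul_assoc, h]

lemma rankIn_eq_two (F : Subfield ℂ) (d : ℕ) (hd : d ≠ 0) (p : MvPolynomial (Fin 2) ℂ)
    (hp0 : p ≠ 0) (hnp : ¬ ∃ a b : ℂ, p = lform a b ^ d)
    (h2 : ∃ lam a b : Fin 2 → ℂ, (∀ j, lam j ∈ F ∧ a j ∈ F ∧ b j ∈ F) ∧
      p = ∑ j, C (lam j) * lform (a j) (b j) ^ d) :
    rankIn F d p = 2 := by
  have hle : rankIn F d p ≤ 2 := Nat.sInf_le h2
  have hmem : ∃ lam a b : Fin (rankIn F d p) → ℂ, (∀ j, lam j ∈ F ∧ a j ∈ F ∧ b j ∈ F) ∧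
      p = ∑ j, C (lam j) * lform (a j) (b j) ^ d := by
    have := Nat.sInf_mem (⟨2, h2⟩ : Set.Nonempty {r : ℕ | ∃ lam a b : Fin r → ℂ,
      (∀ j, lam j ∈ F ∧ a j ∈ F ∧ b j ∈ F) ∧ p = ∑ j, C (lam j) * lform (a j) (b j) ^ d})
    exact this
  rcases (by omega : rankIn F d p = 0 ∨ rankIn F d p = 1 ∨ rankIn F d p = 2) with h | h | h
  · exfalso
    rw [h] at hmem
    obtain ⟨lam, a, b, -, hp⟩ := hmem
    apply hp0
    simpa using hp
  · exfalso
    rw [h] at hmem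
    obtain ⟨lam, a, b, -, hp⟩ := hmem
    rw [Fin.sum_univ_one] at hp
    by_cases hl : lam 0 = 0
    · rw [hl, map_zero, zero_mul] at hp; exact hp0 hp
    · obtain ⟨c, hc⟩ := IsAlgClosed.exists_pow_nat_eq (lam 0) (show 0 < d by omega)
      exact hnp ⟨c * a 0, c * b 0, by rw [lform_smul, mul_pow, ← C_pow, hc]; exact hp⟩
  · exact h

lemma rep_core (F : Subfield ℂ) (d : ℕ) (hd1 : 1 ≤ d) (p : MvPolynomial (Fin 2) ℂ)
    (l₁ l₂ a₁ b₁ a₂ b₂ α₁ β₁ α₂ β₂ c₁ c₂ : ℂ)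
    (hrep : p = C l₁ * lform a₁ b₁ ^ d + C l₂ * lform a₂ b₂ ^ d)
    (hc₁ : c₁ ≠ 0) (hc₂ : c₂ ≠ 0)
    (hα₁ : α₁ = c₁ * a₁) (hβ₁ : β₁ = c₁ * b₁) (hα₂ : α₂ = c₂ * a₂) (hβ₂ : β₂ = c₂ * b₂)
    (hD : a₁ * b₂ - a₂ * b₁ ≠ 0)
    (hEK : ∀ i ≤ d, l₁ * (a₁^i * b₁^(d-i)) + l₂ * (a₂^i * b₂^(d-i)) ∈ F)
    (hm1 : α₁ ∈ F) (hm2 : β₁ ∈ F) (hm3 : α₂ ∈ F) (hm4 : β₂ ∈ F) :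
    ∃ lam a b : Fin 2 → ℂ, (∀ j, lam j ∈ F ∧ a j ∈ F ∧ b j ∈ F) ∧
      p = ∑ j, C (lam j) * lform (a j) (b j) ^ d := by
  have hD' : α₁ * β₂ - α₂ * β₁ ≠ 0 := by
    rw [hα₁, hβ₁, hα₂, hβ₂]
    intro hh; apply hD
    have h : c₁ * c₂ * (a₁*b₂ - a₂*b₁) = 0 := by linear_combination hh
    exact ((mul_eq_zero.1 h).resolve_left (mul_ne_zero hc₁ hc₂))
  have hsys : ∀ i ≤ d, (α₁^i * β₁^(d-i)) * (l₁/c₁^d) + (α₂^i * β₂^(d-i)) * (l₂/c₂^d)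
      = l₁ * (a₁^i * b₁^(d-i)) + l₂ * (a₂^i * b₂^(d-i)) := fun i hi => by
    rw [mul_comm (α₁^i * β₁^(d-i)) _, mul_comm (α₂^i * β₂^(d-i)) _,
      sys_id d l₁ c₁ a₁ b₁ α₁ β₁ hc₁ hα₁ hβ₁ i hi, sys_id d l₂ c₂ a₂ b₂ α₂ β₂ hc₂ hα₂ hβ₂ i hi]
  obtain ⟨i, i', hi, hi', hdet⟩ : ∃ i i', i ≤ d ∧ i' ≤ d ∧
      (α₁^i*β₁^(d-i))*(α₂^i'*β₂^(d-i')) - (α₂^i*β₂^(d-i))*(α₁^i'*β₁^(d-i')) ≠ 0 := by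
    by_cases hβ1 : β₁ = 0
    · have hα1 : α₁ ≠ 0 := by intro hh; apply hD'; rw [hβ1, hh]; ring
      have hβ2 : β₂ ≠ 0 := by
        intro hh; apply hD'; rw [hβ1, hh]; ring
      by_cases hα2 : α₂ = 0
      · refine ⟨d, 0, le_rfl, Nat.zero_le d, ?_⟩
        simp only [Nat.sub_self, Nat.sub_zero, pow_zero, hβ1, hα2, one_mul, mul_one,
          zero_pow (show d ≠ 0 by omega), zero_mul, mul_zero, sub_zero]
        exact mul_ne_zero (pow_ne_zero d hα1) (pow_ne_zero d hβ2)
      · refine ⟨d-1, d, by omega, le_rfl, ?_⟩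
        rw [show d - (d-1) = 1 from by omega, Nat.sub_self, pow_zero, pow_zero, pow_one, pow_one]
        rw [show α₁^d = α₁^(d-1)*α₁ from by rw [← pow_succ]; congr 1; omega,
          show α₂^d = α₂^(d-1)*α₂ from by rw [← pow_succ]; congr 1; omega]
        intro hh; apply hD'
        have h : α₁^(d-1)*α₂^(d-1) * (β₁*α₂ - β₂*α₁) = 0 := by linear_combination hh
        have h2 := (mul_eq_zero.1 h).resolve_left
          (mul_ne_zero (pow_ne_zero _ hα1) (pow_ne_zero _ hα2))
        linear_combination -h2
    · by_cases hβ2 : β₂ = 0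
      · have hα2 : α₂ ≠ 0 := by intro hh; apply hD'; rw [hβ2, hh]; ring
        by_cases hα1 : α₁ = 0
        · refine ⟨0, d, Nat.zero_le d, le_rfl, ?_⟩
          simp only [Nat.sub_zero, Nat.sub_self, pow_zero, hβ2, hα1, one_mul, mul_one,
            zero_pow (show d ≠ 0 by omega), zero_mul, mul_zero, sub_zero]
          exact mul_ne_zero (pow_ne_zero d hβ1) (pow_ne_zero d hα2)
        · refine ⟨d-1, d, by omega, le_rfl, ?_⟩
          rw [show d - (d-1) = 1 from by omega, Nat.sub_self, pow_zero, pow_zero, pow_one, pow_one]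
          rw [show α₁^d = α₁^(d-1)*α₁ from by rw [← pow_succ]; congr 1; omega,
            show α₂^d = α₂^(d-1)*α₂ from by rw [← pow_succ]; congr 1; omega]
          intro hh; apply hD'
          have h : α₁^(d-1)*α₂^(d-1) * (β₁*α₂ - β₂*α₁) = 0 := by linear_combination hh
          have h2 := (mul_eq_zero.1 h).resolve_left
            (mul_ne_zero (pow_ne_zero _ hα1) (pow_ne_zero _ hα2))
          linear_combination -h2
      · refine ⟨0, 1, Nat.zero_le d, by omega, ?_⟩
        rw [Nat.sub_zero, pow_zero, pow_zero, pow_one, pow_one]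
        rw [show β₁^d = β₁^(d-1)*β₁ from by rw [← pow_succ]; congr 1; omega,
          show β₂^d = β₂^(d-1)*β₂ from by rw [← pow_succ]; congr 1; omega]
        intro hh; apply hD'
        have h : β₁^(d-1)*β₂^(d-1) * (β₁*α₂ - β₂*α₁) = 0 := by linear_combination hh
        have h2 := (mul_eq_zero.1 h).resolve_left
          (mul_ne_zero (pow_ne_zero _ hβ1) (pow_ne_zero _ hβ2))
        linear_combination -h2
  obtain ⟨hx, hy⟩ := cramer2 (α₁^i*β₁^(d-i)) (α₂^i*β₂^(d-i)) (α₁^i'*β₁^(d-i')) (α₂^i'*β₂^(d-i'))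
    (l₁ * (a₁^i * b₁^(d-i)) + l₂ * (a₂^i * b₂^(d-i)))
    (l₁ * (a₁^i' * b₁^(d-i')) + l₂ * (a₂^i' * b₂^(d-i')))
    (l₁/c₁^d) (l₂/c₂^d) hdet (hsys i hi) (hsys i' hi')
  have hmon : ∀ (x y : ℂ) (n m : ℕ), x ∈ F → y ∈ F → x^n*y^m ∈ F := fun x y n m hx hy =>
    F.mul_mem (pow_mem hx n) (pow_mem hy m)
  have hdetF : (α₁^i*β₁^(d-i))*(α₂^i'*β₂^(d-i')) - (α₂^i*β₂^(d-i))*(α₁^i'*β₁^(d-i')) ∈ F :=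
    F.sub_mem (F.mul_mem (hmon _ _ _ _ hm1 hm2) (hmon _ _ _ _ hm3 hm4))
      (F.mul_mem (hmon _ _ _ _ hm3 hm4) (hmon _ _ _ _ hm1 hm2))
  have hlam1F : l₁/c₁^d ∈ F := by
    rw [hx]
    exact F.div_mem (F.sub_mem (F.mul_mem (hEK i hi) (hmon _ _ _ _ hm3 hm4))
      (F.mul_mem (hEK i' hi') (hmon _ _ _ _ hm3 hm4))) hdetF
  have hlam2F : l₂/c₂^d ∈ F := by
    rw [hy]
    exact F.div_mem (F.sub_mem (F.mul_mem (hmon _ _ _ _ hm1 hm2) (hEK i' hi'))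
      (F.mul_mem (hmon _ _ _ _ hm1 hm2) (hEK i hi))) hdetF
  refine ⟨![l₁/c₁^d, l₂/c₂^d], ![α₁, α₂], ![β₁, β₂], ?_, ?_⟩
  · intro j; fin_cases j
    · exact ⟨hlam1F, hm1, hm2⟩
    · exact ⟨hlam2F, hm3, hm4⟩
  · rw [hrep, Fin.sum_univ_two]
    simp only [Matrix.cons_val_zero, Matrix.cons_val_one, Matrix.head_cons]
    rw [show lform α₁ β₁ = C c₁ * lform a₁ b₁ from by rw [hα₁, hβ₁, lform_smul],
      show lform α₂ β₂ = C c₂ * lform a₂ b₂ from by rw [hα₂, hβ₂, lform_smul],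
      mul_pow, mul_pow, ← C_pow, ← C_pow, ← mul_assoc, ← mul_assoc, ← C_mul, ← C_mul,
      div_mul_cancel₀ l₁ (pow_ne_zero d hc₁), div_mul_cancel₀ l₂ (pow_ne_zero d hc₂)]

/-- If a binary form over `K` of degree `d ≥ 3`, not a `d`-th power, has an honest
representation of length 2 over `ℂ` but `K`-rank `> 2`, then its rank over `K(√u)` is `2`
for some `u ∈ K` with `√u ∉ K`, and the two summands are conjugate over `K` in `K(√u)`. -/
theorem rank_two_conjugate (K : Subfield ℂ) (d : ℕ) (hd : 3 ≤ d)
    (p : MvPolynomial (Fin 2) ℂ) (hp0 : p ≠ 0) (hph : p.IsHomogeneous d)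
    (hpK : ∀ m, p.coeff m ∈ K)
    (hnp : ¬ ∃ a b : ℂ, p = lform a b ^ d)
    (l₁ l₂ a₁ b₁ a₂ b₂ : ℂ)
    (hrep : p = C l₁ * lform a₁ b₁ ^ d + C l₂ * lform a₂ b₂ ^ d)
    (honest : l₁ * l₂ * (a₁ * b₂ - a₂ * b₁) ≠ 0)
    (hrk : 2 < rankIn K d p) :
    ∃ u ∈ K, (∀ s : ℂ, s ^ 2 = u → s ∉ K) ∧
      ∀ s : ℂ, s ^ 2 = u →
        rankIn (adj K {s}) d p = 2 ∧
        ∀ m, conjPair K s ((C l₁ * lform a₁ b₁ ^ d).coeff m)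
          ((C l₂ * lform a₂ b₂ ^ d).coeff m) := by
  have hl₁ : l₁ ≠ 0 := fun h => honest (by rw [h]; ring)
  have hl₂ : l₂ ≠ 0 := fun h => honest (by rw [h]; ring)
  have hD : a₁ * b₂ - a₂ * b₁ ≠ 0 := fun h => honest (by rw [h]; ring)
  obtain ⟨E, hEdef⟩ : ∃ E : ℕ → ℂ, E = fun i => l₁ * (a₁^i * b₁^(d-i)) + l₂ * (a₂^i * b₂^(d-i)) :=
    ⟨_, rfl⟩
  have coeffp : ∀ i ≤ d,
      p.coeff (Finsupp.single 0 i + Finsupp.single 1 (d-i)) = (d.choose i : ℂ) * E i := by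
    intro i hi
    have hm0 : ((Finsupp.single (0 : Fin 2) i + Finsupp.single 1 (d-i)) : Fin 2 →₀ ℕ) 0 = i := by
      simp [Finsupp.single_apply]
    have hm1 : ((Finsupp.single (0 : Fin 2) i + Finsupp.single 1 (d-i)) : Fin 2 →₀ ℕ) 1 = d - i := by
      simp [Finsupp.single_apply]
    rw [hrep, coeff_add, coeff_C_mul, coeff_C_mul, coeff_lform_pow, coeff_lform_pow, hm0, hm1,
      if_pos (by omega), if_pos (by omega)]
    simp only [hEdef]; ring
  have hEK : ∀ i ≤ d, E i ∈ K := by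
    intro i hi
    have hch : (d.choose i : ℂ) ≠ 0 := Nat.cast_ne_zero.2 (Nat.choose_pos hi).ne'
    have h1 := hpK (Finsupp.single 0 i + Finsupp.single 1 (d-i))
    rw [coeffp i hi] at h1
    have h2 : E i = ((d.choose i : ℂ))⁻¹ * ((d.choose i : ℂ) * E i) := by
      rw [inv_mul_cancel_left₀ hch]
    rw [h2]
    exact K.mul_mem (K.inv_mem (natCast_mem K _)) h1
  have hrec : ∀ i ≤ d - 2,
      (b₁*b₂) * E (i+2) + (-(a₁*b₂+a₂*b₁)) * E (i+1) + (a₁*a₂) * E i = 0 := by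
    intro i hi
    simp only [hEdef]
    rw [show d - (i+2) = d-2-i from by omega, show d - (i+1) = (d-2-i)+1 from by omega,
      show d - i = (d-2-i)+2 from by omega]
    ring
  have vne0 : ¬(b₁*b₂ = 0 ∧ -(a₁*b₂+a₂*b₁) = 0 ∧ a₁*a₂ = 0) := by
    rintro ⟨h1, h2, h3⟩
    apply hD
    rcases mul_eq_zero.1 h1 with h | h
    · rcases mul_eq_zero.1 h3 with h' | h'
      · linear_combination b₂*h' - a₂*h
      · linear_combination -h2 - 2*a₂*h
    · rcases mul_eq_zero.1 h3 with h' | h'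
      · linear_combination h2 + 2*b₂*h'
      · linear_combination a₁*h - b₁*h'
  have killer : ∀ z0 z1 z2 : ℂ,
      (∀ i ≤ d - 2, z0 * E (i+2) + z1 * E (i+1) + z2 * E i = 0) →
      ∃ c : ℂ, z0 = c*(b₁*b₂) ∧ z1 = c*(-(a₁*b₂+a₂*b₁)) ∧ z2 = c*(a₁*a₂) := by
    intro z0 z1 z2 hz
    have hQ : ∀ i ≤ d-2,
        (l₁*(z0*a₁^2+z1*(a₁*b₁)+z2*b₁^2)) * (a₁^i*b₁^(d-2-i))
        + (l₂*(z0*a₂^2+z1*(a₂*b₂)+z2*b₂^2)) * (a₂^i*b₂^(d-2-i)) = 0 := by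
      intro i hi
      have h := hz i hi
      simp only [hEdef] at h
      rw [show d - (i+2) = d-2-i from by omega, show d - (i+1) = (d-2-i)+1 from by omega,
        show d - i = (d-2-i)+2 from by omega] at h
      linear_combination h
    obtain ⟨hq1, hq2⟩ := seq_indep a₁ b₁ a₂ b₂ _ _ hD (d-2) (by omega) hQ
    have hQ1 : z0*a₁^2+z1*(a₁*b₁)+z2*b₁^2 = 0 := (mul_eq_zero.1 hq1).resolve_left hl₁
    have hQ2 : z0*a₂^2+z1*(a₂*b₂)+z2*b₂^2 = 0 := (mul_eq_zero.1 hq2).resolve_left hl₂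
    have c01 : (b₁*b₂)*z1 - (-(a₁*b₂+a₂*b₁))*z0 = 0 := by
      have h : (a₁*b₂-a₂*b₁) * ((b₁*b₂)*z1 - (-(a₁*b₂+a₂*b₁))*z0) = 0 := by
        linear_combination b₂^2*hQ1 - b₁^2*hQ2
      exact (mul_eq_zero.1 h).resolve_left hD
    have c02 : (b₁*b₂)*z2 - (a₁*a₂)*z0 = 0 := by
      have h : (a₁*b₂-a₂*b₁) * ((b₁*b₂)*z2 - (a₁*a₂)*z0) = 0 := by
        linear_combination a₁*b₁*hQ2 - a₂*b₂*hQ1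
      exact (mul_eq_zero.1 h).resolve_left hD
    have c12 : (-(a₁*b₂+a₂*b₁))*z2 - (a₁*a₂)*z1 = 0 := by
      have h : (a₁*b₂-a₂*b₁) * ((-(a₁*b₂+a₂*b₁))*z2 - (a₁*a₂)*z1) = 0 := by
        linear_combination a₂^2*hQ1 - a₁^2*hQ2
      exact (mul_eq_zero.1 h).resolve_left hD
    exact cross_prop _ _ _ _ _ _ c01 c02 c12 vne0
  obtain ⟨A₀, B₀, C₀, hA₀K, hB₀K, hC₀K, μ, hμ, hA, hB, hC⟩ :
      ∃ A₀ B₀ C₀ : ℂ, A₀ ∈ K ∧ B₀ ∈ K ∧ C₀ ∈ K ∧ ∃ μ : ℂ, μ ≠ 0 ∧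
        b₁*b₂ = μ*A₀ ∧ -(a₁*b₂+a₂*b₁) = μ*B₀ ∧ a₁*a₂ = μ*C₀ := by
    by_cases hcr : ∃ i, i ≤ d-2 ∧ ∃ j, j ≤ d-2 ∧
        (¬ (E (i+1) * E j - E i * E (j+1) = 0) ∨ ¬ (E i * E (j+2) - E (i+2) * E j = 0) ∨
         ¬ (E (i+2) * E (j+1) - E (i+1) * E (j+2) = 0))
    · obtain ⟨i, hi, j, hj, hne⟩ := hcr
      have hriv := hrec i hi
      have hrjv := hrec j hj
      have d01 : (E (i+1) * E j - E i * E (j+1)) * (-(a₁*b₂+a₂*b₁))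
          - (E i * E (j+2) - E (i+2) * E j) * (b₁*b₂) = 0 := by
        linear_combination (E j) * hriv - (E i) * hrjv
      have d02 : (E (i+1) * E j - E i * E (j+1)) * (a₁*a₂)
          - (E (i+2) * E (j+1) - E (i+1) * E (j+2)) * (b₁*b₂) = 0 := by
        linear_combination (E (i+1)) * hrjv - (E (j+1)) * hriv
      have d12 : (E i * E (j+2) - E (i+2) * E j) * (a₁*a₂)
          - (E (i+2) * E (j+1) - E (i+1) * E (j+2)) * (-(a₁*b₂+a₂*b₁)) = 0 := by
        linear_combination (E (j+2)) * hriv - (E (i+2)) * hrjv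
      have hwne : ¬((E (i+1) * E j - E i * E (j+1)) = 0 ∧ (E i * E (j+2) - E (i+2) * E j) = 0
          ∧ (E (i+2) * E (j+1) - E (i+1) * E (j+2)) = 0) := by tauto
      obtain ⟨c, hc0, hc1, hc2⟩ := cross_prop _ _ _ _ _ _ d01 d02 d12 hwne
      have hcne : c ≠ 0 := by
        rintro rfl
        exact vne0 ⟨by rw [hc0]; ring, by rw [hc1]; ring, by rw [hc2]; ring⟩
      have hmm : ∀ a b : ℕ, a ≤ d → b ≤ d → E a * E b ∈ K :=
        fun a b ha hb => K.mul_mem (hEK a ha) (hEK b hb)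
      exact ⟨E (i+1) * E j - E i * E (j+1), E i * E (j+2) - E (i+2) * E j,
        E (i+2) * E (j+1) - E (i+1) * E (j+2),
        K.sub_mem (hmm _ _ (by omega) (by omega)) (hmm _ _ (by omega) (by omega)),
        K.sub_mem (hmm _ _ (by omega) (by omega)) (hmm _ _ (by omega) (by omega)),
        K.sub_mem (hmm _ _ (by omega) (by omega)) (hmm _ _ (by omega) (by omega)),
        c, hcne, hc0, hc1, hc2⟩
    · push_neg at hcr
      exfalso
      by_cases hall : ∀ i ≤ d, E i = 0
      · apply hp0
        apply MvPolynomial.ext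
        intro m
        rw [coeff_zero]
        by_cases hdm : m 0 + m 1 = d
        · rw [mono_eq m, show m 1 = d - m 0 from by omega, coeffp (m 0) (by omega),
            hall (m 0) (by omega), mul_zero]
        · exact hph.coeff_eq_zero (by rw [degree_fin2]; exact hdm)
      · push_neg at hall
        obtain ⟨i₀, hi₀, hEi₀⟩ := hall
        have hrow : ∃ i, i ≤ d-2 ∧ ¬(E (i+2) = 0 ∧ E (i+1) = 0 ∧ E i = 0) := by
          rcases Nat.lt_or_ge i₀ (d-1) with h | h
          · exact ⟨i₀, by omega, fun hh => hEi₀ hh.2.2⟩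
          · rcases Nat.eq_or_lt_of_le h with h' | h'
            · exact ⟨d-2, by omega, fun hh => hEi₀
                (by rw [show i₀ = (d-2)+1 from by omega]; exact hh.2.1)⟩
            · exact ⟨d-2, by omega, fun hh => hEi₀
                (by rw [show i₀ = (d-2)+2 from by omega]; exact hh.1)⟩
        obtain ⟨i, hi, hri⟩ := hrow
        have hker : ∀ z0 z1 z2 : ℂ, E (i+2) * z0 + E (i+1) * z1 + E i * z2 = 0 →
            ∀ j ≤ d-2, z0 * E (j+2) + z1 * E (j+1) + z2 * E j = 0 := by
          intro z0 z1 z2 hz j hj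
          obtain ⟨h1, h2, h3⟩ := hcr i hi j hj
          obtain ⟨c, e0, e1, e2⟩ := cross_prop (E (i+2)) (E (i+1)) (E i)
            (E (j+2)) (E (j+1)) (E j) h3 (by linear_combination -h2) h1 hri
          rw [e0, e1, e2]
          linear_combination c * hz
        rcases (by tauto : E (i+2) ≠ 0 ∨ E (i+1) ≠ 0 ∨ E i ≠ 0) with h | h | h
        · obtain ⟨c₁, e10, e11, e12⟩ := killer (E (i+1)) (-(E (i+2))) 0
            (hker _ _ _ (by ring))
          obtain ⟨c₂, e20, e21, e22⟩ := killer (E i) 0 (-(E (i+2)))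
            (hker _ _ _ (by ring))
          have hv2 : a₁*a₂ ≠ 0 := by
            intro hh; rw [hh, mul_zero] at e22; exact h (by linear_combination -e22)
          have hc₁0 : c₁ = 0 := by
            rcases mul_eq_zero.1 e12.symm with hh | hh
            · exact hh
            · exact absurd hh hv2
          rw [hc₁0, zero_mul] at e11
          exact h (by linear_combination -e11)
        · obtain ⟨c₁, e10, e11, e12⟩ := killer (E (i+1)) (-(E (i+2))) 0
            (hker _ _ _ (by ring))
          obtain ⟨c₃, e30, e31, e32⟩ := killer 0 (E i) (-(E (i+1)))
            (hker _ _ _ (by ring))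
          have hv0 : b₁*b₂ ≠ 0 := by
            intro hh; rw [hh, mul_zero] at e10; exact h e10
          have hc₃0 : c₃ = 0 := (mul_eq_zero.1 e30.symm).resolve_right hv0
          rw [hc₃0, zero_mul] at e32
          exact h (by linear_combination -e32)
        · obtain ⟨c₂, e20, e21, e22⟩ := killer (E i) 0 (-(E (i+2)))
            (hker _ _ _ (by ring))
          obtain ⟨c₃, e30, e31, e32⟩ := killer 0 (E i) (-(E (i+1)))
            (hker _ _ _ (by ring))
          have hv0 : b₁*b₂ ≠ 0 := by
            intro hh; rw [hh, mul_zero] at e20; exact h e20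
          have hc₃0 : c₃ = 0 := (mul_eq_zero.1 e30.symm).resolve_right hv0
          rw [hc₃0, zero_mul] at e31
          exact h e31
  -- discriminant
  have h2K : (2:ℂ) ∈ K := by
    exact ofNat_mem K 2
  have h4K : (4:ℂ) ∈ K := by
    exact ofNat_mem K 4
  have huK : B₀^2 - 4*(A₀*C₀) ∈ K :=
    K.sub_mem (pow_mem hB₀K 2) (K.mul_mem h4K (K.mul_mem hA₀K hC₀K))
  have hDu : (a₁*b₂ - a₂*b₁)^2 = μ^2 * (B₀^2 - 4*(A₀*C₀)) := by
    linear_combination (μ*B₀ - (a₁*b₂+a₂*b₁))*hB - 4*μ*C₀*hA - 4*(b₁*b₂)*hC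
  obtain ⟨t, htdef⟩ : ∃ t : ℂ, t = (a₁*b₂ - a₂*b₁)/μ := ⟨_, rfl⟩
  have ht2 : t^2 = B₀^2 - 4*(A₀*C₀) := by
    rw [htdef, div_pow, hDu, mul_comm, mul_div_assoc, div_self (pow_ne_zero 2 hμ), mul_one]
  have htne : t ≠ 0 := by rw [htdef]; exact div_ne_zero hD hμ
  have hμt : μ * t = a₁*b₂ - a₂*b₁ := by
    rw [htdef, mul_div_cancel₀ _ hμ]
  have hpm : ∀ s : ℂ, s^2 = B₀^2 - 4*(A₀*C₀) → t = s ∨ t = -s := by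
    intro s hs2
    have h' : (t - s)*(t + s) = 0 := by linear_combination ht2 - hs2
    rcases mul_eq_zero.1 h' with h | h
    · exact Or.inl (sub_eq_zero.1 h)
    · exact Or.inr (eq_neg_of_add_eq_zero_left h)
  obtain ⟨P, hPdef⟩ : ∃ P : ℂ, P = (a₁*b₂)/μ := ⟨_, rfl⟩
  obtain ⟨R, hRdef⟩ : ∃ R : ℂ, R = (a₂*b₁)/μ := ⟨_, rfl⟩
  have hμP : μ * P = a₁*b₂ := by rw [hPdef, mul_div_cancel₀ _ hμ]
  have hμR : μ * R = a₂*b₁ := by rw [hRdef, mul_div_cancel₀ _ hμ]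
  have hPR_B : P + R = -B₀ := by
    have h1 : μ*(P+R) = μ*(-B₀) := by rw [mul_add, hμP, hμR]; linear_combination -hB
    exact mul_left_cancel₀ hμ h1
  have hPR_t : P - R = t := by
    have h1 : μ*(P-R) = μ*t := by rw [mul_sub, hμP, hμR, hμt]
    exact mul_left_cancel₀ hμ h1
  -- branch (a): no square root of u lies in K
  have hnotK : ∀ s : ℂ, s^2 = B₀^2 - 4*(A₀*C₀) → s ∉ K := by
    intro s hs2 hsmem
    have htK : t ∈ K := by
      rcases hpm s hs2 with h | h
      · rw [h]; exact hsmem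
      · rw [h]; exact K.neg_mem hsmem
    have hPK : (a₁*b₂)/μ ∈ K := by
      have hPe : (a₁*b₂)/μ = (-B₀ + t)/2 := by
        rw [← hPdef]; linear_combination hPR_B/2 + hPR_t/2
      rw [hPe]
      exact K.div_mem (K.add_mem (K.neg_mem hB₀K) htK) h2K
    have hRK : (a₂*b₁)/μ ∈ K := by
      have hRe : (a₂*b₁)/μ = (-B₀ - t)/2 := by
        rw [← hRdef]; linear_combination hPR_B/2 - hPR_t/2
      rw [hRe]
      exact K.div_mem (K.sub_mem (K.neg_mem hB₀K) htK) h2K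
    have hAK' : (b₁*b₂)/μ ∈ K := by
      rw [hA, mul_comm, mul_div_assoc, div_self hμ, mul_one]; exact hA₀K
    have hCK' : (a₁*a₂)/μ ∈ K := by
      rw [hC, mul_comm, mul_div_assoc, div_self hμ, mul_one]; exact hC₀K
    obtain ⟨α₁, β₁, c₁, hc₁, hα₁, hβ₁, hα₁K, hβ₁K⟩ :
        ∃ α β c : ℂ, c ≠ 0 ∧ α = c*a₁ ∧ β = c*b₁ ∧ α ∈ K ∧ β ∈ K := by
      by_cases hb2 : b₂ = 0
      · have ha2 : a₂ ≠ 0 := by intro hh; apply hD; rw [hb2, hh]; ring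
        exact ⟨(a₁*a₂)/μ, (a₂*b₁)/μ, a₂/μ, div_ne_zero ha2 hμ,
          by rw [div_mul_eq_mul_div, mul_comm a₂ a₁],
          by rw [div_mul_eq_mul_div, mul_comm a₂ b₁], hCK', hRK⟩
      · exact ⟨(a₁*b₂)/μ, (b₁*b₂)/μ, b₂/μ, div_ne_zero hb2 hμ,
          by rw [div_mul_eq_mul_div, mul_comm b₂ a₁],
          by rw [div_mul_eq_mul_div, mul_comm b₂ b₁], hPK, hAK'⟩
    obtain ⟨α₂, β₂, c₂, hc₂, hα₂, hβ₂, hα₂K, hβ₂K⟩ :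
        ∃ α β c : ℂ, c ≠ 0 ∧ α = c*a₂ ∧ β = c*b₂ ∧ α ∈ K ∧ β ∈ K := by
      by_cases hb1 : b₁ = 0
      · have ha1 : a₁ ≠ 0 := by intro hh; apply hD; rw [hb1, hh]; ring
        exact ⟨(a₁*a₂)/μ, (a₁*b₂)/μ, a₁/μ, div_ne_zero ha1 hμ,
          by rw [div_mul_eq_mul_div], by rw [div_mul_eq_mul_div], hCK', hPK⟩
      · exact ⟨(a₂*b₁)/μ, (b₁*b₂)/μ, b₁/μ, div_ne_zero hb1 hμ,
          by rw [div_mul_eq_mul_div, mul_comm b₁ a₂],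
          by rw [div_mul_eq_mul_div], hRK, hAK'⟩
    have hrep2 := rep_core K d (by omega) p l₁ l₂ a₁ b₁ a₂ b₂ α₁ β₁ α₂ β₂ c₁ c₂ hrep
      hc₁ hc₂ hα₁ hβ₁ hα₂ hβ₂ hD (fun i hi => by
        have := hEK i hi; simp only [hEdef] at this; exact this) hα₁K hβ₁K hα₂K hβ₂K
    have : rankIn K d p ≤ 2 := Nat.sInf_le hrep2
    omega
  refine ⟨B₀^2 - 4*(A₀*C₀), huK, hnotK, ?_⟩
  intro s hs2
  -- b₁ b₂ nonzero
  have hb₁ : b₁ ≠ 0 := by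
    intro hh
    apply hnotK t ht2
    have h1 : μ*t = μ*(-B₀) := by rw [hμt]; linear_combination -hB - 2*a₂*hh
    rw [mul_left_cancel₀ hμ h1]
    exact K.neg_mem hB₀K
  have hb₂ : b₂ ≠ 0 := by
    intro hh
    apply hnotK t ht2
    have h1 : μ*t = μ*B₀ := by rw [hμt]; linear_combination hB + 2*a₁*hh
    rw [mul_left_cancel₀ hμ h1]
    exact hB₀K
  have hA₀ne : A₀ ≠ 0 := by
    intro hh; rw [hh, mul_zero] at hA; exact (mul_ne_zero hb₁ hb₂) hA
  have cpPR : conjPair K t P R :=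
    ⟨-B₀/2, 1/2, K.div_mem (K.neg_mem hB₀K) h2K, K.div_mem K.one_mem h2K,
      by linear_combination hPR_B/2 + hPR_t/2, by linear_combination hPR_B/2 - hPR_t/2⟩
  have ht2K : t^2 ∈ K := by rw [ht2]; exact huK
  obtain ⟨c₁, hc₁def⟩ : ∃ c : ℂ, c = b₂/μ := ⟨_, rfl⟩
  obtain ⟨c₂, hc₂def⟩ : ∃ c : ℂ, c = b₁/μ := ⟨_, rfl⟩
  have hc₁ : c₁ ≠ 0 := by rw [hc₁def]; exact div_ne_zero hb₂ hμ
  have hc₂ : c₂ ≠ 0 := by rw [hc₂def]; exact div_ne_zero hb₁ hμ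
  have hα₁ : P = c₁ * a₁ := by rw [hPdef, hc₁def, div_mul_eq_mul_div, mul_comm b₂ a₁]
  have hβ₁ : A₀ = c₁ * b₁ := by
    rw [hc₁def, div_mul_eq_mul_div, eq_div_iff hμ]
    linear_combination -hA
  have hα₂ : R = c₂ * a₂ := by rw [hRdef, hc₂def, div_mul_eq_mul_div, mul_comm b₁ a₂]
  have hβ₂ : A₀ = c₂ * b₂ := by
    rw [hc₂def, div_mul_eq_mul_div, eq_div_iff hμ]
    linear_combination -hA
  have hsys : ∀ i ≤ d, (P^i * A₀^(d-i)) * (l₁/c₁^d) + (R^i * A₀^(d-i)) * (l₂/c₂^d) = E i :=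
    fun i hi => by
      simp only [hEdef]
      rw [mul_comm (P^i * A₀^(d-i)) _, mul_comm (R^i * A₀^(d-i)) _,
        sys_id d l₁ c₁ a₁ b₁ P A₀ hc₁ hα₁ hβ₁ i hi, sys_id d l₂ c₂ a₂ b₂ R A₀ hc₂ hα₂ hβ₂ i hi]
  have hdet : (P^0 * A₀^(d-0)) * (R^1 * A₀^(d-1)) - (R^0 * A₀^(d-0)) * (P^1 * A₀^(d-1)) ≠ 0 := by
    have he : (P^0 * A₀^(d-0)) * (R^1 * A₀^(d-1)) - (R^0 * A₀^(d-0)) * (P^1 * A₀^(d-1))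
        = A₀^d * A₀^(d-1) * (R - P) := by
      rw [Nat.sub_zero]; ring
    rw [he]
    refine mul_ne_zero (mul_ne_zero (pow_ne_zero _ hA₀ne) (pow_ne_zero _ hA₀ne)) ?_
    intro hh
    apply htne
    rw [← hPR_t]
    linear_combination -hh
  obtain ⟨hlam1, hlam2⟩ := cramer2 (P^0 * A₀^(d-0)) (R^0 * A₀^(d-0)) (P^1 * A₀^(d-1))
    (R^1 * A₀^(d-1)) (E 0) (E 1) (l₁/c₁^d) (l₂/c₂^d) hdet (hsys 0 (by omega)) (hsys 1 (by omega))
  have cpA : conjPair K t A₀ A₀ := conjPair.of_mem hA₀K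
  have cp11 : conjPair K t (P^0 * A₀^(d-0)) (R^0 * A₀^(d-0)) :=
    (cpPR.pow ht2K 0).mul ht2K (cpA.pow ht2K (d-0))
  have cp21 : conjPair K t (P^1 * A₀^(d-1)) (R^1 * A₀^(d-1)) :=
    (cpPR.pow ht2K 1).mul ht2K (cpA.pow ht2K (d-1))
  have cpE0 : conjPair K t (E 0) (E 0) := conjPair.of_mem (hEK 0 (by omega))
  have cpE1 : conjPair K t (E 1) (E 1) := conjPair.of_mem (hEK 1 (by omega))
  have cpdet : conjPair K t
      ((P^0 * A₀^(d-0)) * (R^1 * A₀^(d-1)) - (R^0 * A₀^(d-0)) * (P^1 * A₀^(d-1)))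
      ((R^0 * A₀^(d-0)) * (P^1 * A₀^(d-1)) - (P^0 * A₀^(d-0)) * (R^1 * A₀^(d-1))) :=
    (cp11.mul ht2K cp21.symm).sub (cp11.symm.mul ht2K cp21)
  have cpnum : conjPair K t
      (E 0 * (R^1 * A₀^(d-1)) - E 1 * (R^0 * A₀^(d-0)))
      (E 0 * (P^1 * A₀^(d-1)) - E 1 * (P^0 * A₀^(d-0))) :=
    (cpE0.mul ht2K cp21.symm).sub (cpE1.mul ht2K cp11.symm)
  have hdet' : (R^0 * A₀^(d-0)) * (P^1 * A₀^(d-1)) - (P^0 * A₀^(d-0)) * (R^1 * A₀^(d-1)) ≠ 0 := by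
    intro hh; apply hdet; linear_combination -hh
  have hlam2' : l₂/c₂^d =
      (E 0 * (P^1 * A₀^(d-1)) - E 1 * (P^0 * A₀^(d-0)))
      / ((R^0 * A₀^(d-0)) * (P^1 * A₀^(d-1)) - (P^0 * A₀^(d-0)) * (R^1 * A₀^(d-1))) := by
    rw [hlam2, div_eq_div_iff hdet hdet']
    ring
  have cplam : conjPair K t (l₁/c₁^d) (l₂/c₂^d) := by
    rw [hlam1, hlam2']
    exact cpnum.div ht2K cpdet hdet hdet'
  -- main results for t
  have main : rankIn (adj K {t}) d p = 2 ∧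
      ∀ m, conjPair K t ((C l₁ * lform a₁ b₁ ^ d).coeff m)
        ((C l₂ * lform a₂ b₂ ^ d).coeff m) := by
    constructor
    · apply rankIn_eq_two (adj K {t}) d (by omega) p hp0 hnp
      have hKsub : ∀ x ∈ K, x ∈ adj K {t} := fun x hx =>
        Subfield.subset_closure (Set.mem_union_left _ hx)
      exact rep_core (adj K {t}) d (by omega) p l₁ l₂ a₁ b₁ a₂ b₂ P A₀ R A₀ c₁ c₂ hrep
        hc₁ hc₂ hα₁ hβ₁ hα₂ hβ₂ hD
        (fun i hi => by
          have := hEK i hi; simp only [hEdef] at this; exact hKsub _ this)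
        cpPR.mem_adj.1 (hKsub _ hA₀K) cpPR.mem_adj.2 (hKsub _ hA₀K)
    · intro m
      rw [coeff_C_mul, coeff_C_mul, coeff_lform_pow, coeff_lform_pow]
      by_cases hm : m 0 + m 1 = d
      · rw [if_pos hm, if_pos hm]
        have hcc1 : c₁^(m 0) * c₁^(m 1) = c₁^d := by rw [← pow_add, hm]
        have hcc2 : c₂^(m 0) * c₂^(m 1) = c₂^d := by rw [← pow_add, hm]
        have e1 : l₁ * ((d.choose (m 0) : ℂ) * (a₁^(m 0) * b₁^(m 1)))
            = (d.choose (m 0) : ℂ) * ((l₁/c₁^d) * (P^(m 0) * A₀^(m 1))) := by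
          rw [hα₁, hβ₁, mul_pow, mul_pow,
            show c₁^(m 0)*a₁^(m 0)*(c₁^(m 1)*b₁^(m 1)) = (c₁^(m 0)*c₁^(m 1))*(a₁^(m 0)*b₁^(m 1))
              from by ring, hcc1, show (l₁/c₁^d) * (c₁^d * (a₁^(m 0)*b₁^(m 1)))
              = (l₁/c₁^d*c₁^d) * (a₁^(m 0)*b₁^(m 1)) from by ring,
            div_mul_cancel₀ l₁ (pow_ne_zero d hc₁)]
          ring
        have e2 : l₂ * ((d.choose (m 0) : ℂ) * (a₂^(m 0) * b₂^(m 1)))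
            = (d.choose (m 0) : ℂ) * ((l₂/c₂^d) * (R^(m 0) * A₀^(m 1))) := by
          rw [hα₂, hβ₂, mul_pow, mul_pow,
            show c₂^(m 0)*a₂^(m 0)*(c₂^(m 1)*b₂^(m 1)) = (c₂^(m 0)*c₂^(m 1))*(a₂^(m 0)*b₂^(m 1))
              from by ring, hcc2, show (l₂/c₂^d) * (c₂^d * (a₂^(m 0)*b₂^(m 1)))
              = (l₂/c₂^d*c₂^d) * (a₂^(m 0)*b₂^(m 1)) from by ring,
            div_mul_cancel₀ l₂ (pow_ne_zero d hc₂)]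
          ring
        rw [e1, e2]
        exact (conjPair.of_mem (natCast_mem K _)).mul ht2K
          (cplam.mul ht2K ((cpPR.pow ht2K (m 0)).mul ht2K (cpA.pow ht2K (m 1))))
      · rw [if_neg hm, if_neg hm, mul_zero, mul_zero]
        exact conjPair.of_mem K.zero_mem
  rcases hpm s hs2 with h | h
  · rw [← h]
    exact main
  · have hs' : s = -t := by rw [h, neg_neg]
    constructor
    · rw [hs', show adj K ({-t} : Set ℂ) = adj K ({t} : Set ℂ) from adj_neg K t]
      exact main.1
    · intro m
      rw [hs']
      exact (main.2 m).neg_s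
end

section
/- Let γ ∈ ℚ with √γ ∉ ℚ, let d ≥ 3, and let p_d(x,y) = Σ_{0 ≤ 2i ≤ d} (d choose 2i) γ^i x^{d−2i} y^{2i}. Then p_d(x,y) = (1/2)(x + √γ y)^d + (1/2)(x − √γ y)^d, L_ℂ(p_d) = 2, this is (up to order and scaling of the linear forms) the unique representation of p_d of length 2, and for a field K with ℚ ⊆ K ⊆ ℂ one has L_K(p_d) = 2 if and only if √γ ∈ K. -/
open MvPolynomial Finset

lemma lform_pow (a b : ℂ) (n : ℕ) :
    lform a b ^ n = ∑ k ∈ range (n+1),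
      C ((n.choose k : ℂ) * a ^ k * b ^ (n-k)) * X 0 ^ k * X 1 ^ (n-k) := by
  rw [lform, Commute.add_pow (Commute.all _ _)]
  refine Finset.sum_congr rfl fun k hk => ?_
  rw [mul_pow, mul_pow, ← C_pow, ← C_pow, ← C_eq_coe_nat, C_mul, C_mul]
  ring

lemma CXpow (c : ℂ) (m k : ℕ) :
    C c * X 0 ^ m * X 1 ^ k
      = monomial (Finsupp.single (0 : Fin 2) m + Finsupp.single 1 k) c := by
  rw [X_pow_eq_monomial, X_pow_eq_monomial, ← monomial_zero', monomial_mul, monomial_mul]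
  simp

lemma single_inj {m k m' k' : ℕ} :
    (Finsupp.single (0:Fin 2) m + Finsupp.single 1 k
      = Finsupp.single 0 m' + Finsupp.single 1 k') ↔ (m = m' ∧ k = k') := by
  constructor
  · intro h
    constructor
    · have := DFunLike.congr_fun h 0; simpa [Finsupp.single_apply] using this
    · have := DFunLike.congr_fun h 1; simpa [Finsupp.single_apply] using this
  · rintro ⟨rfl, rfl⟩; rfl

lemma coeff_lp (c a b : ℂ) (n t : ℕ) (ht : t ≤ n) :
    coeff (Finsupp.single 0 (n-t) + Finsupp.single 1 t) (C c * lform a b ^ n)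
      = c * (n.choose t : ℂ) * a ^ (n-t) * b ^ t := by
  have key : ∀ k, C c * (C ((n.choose k : ℂ) * a ^ k * b ^ (n-k)) * X 0 ^ k * X 1 ^ (n-k))
      = monomial (Finsupp.single (0:Fin 2) k + Finsupp.single 1 (n-k))
          (c * ((n.choose k : ℂ) * a ^ k * b ^ (n-k))) := by
    intro k
    rw [← CXpow, C_mul (a := c)]; ring
  rw [lform_pow, Finset.mul_sum, coeff_sum]
  rw [Finset.sum_eq_single (n - t)]
  · rw [key, coeff_monomial, if_pos (by rw [single_inj]; omega)]
    have h2 : n - (n - t) = t := by omega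
    rw [h2, Nat.choose_symm ht]; ring
  · intro k hk hkne
    rw [key, coeff_monomial, if_neg]
    intro h
    exact hkne (single_inj.mp h).1
  · intro h
    exact absurd (Finset.mem_range.mpr (by omega)) h

lemma psum (d : ℕ) (γ : ℚ) (s : ℂ) (hs : s ^ 2 = (γ:ℂ)) :
    (∑ i ∈ range (d / 2 + 1),
      C ((d.choose (2 * i) : ℂ) * (γ : ℂ) ^ i) * X 0 ^ (d - 2 * i) * X 1 ^ (2 * i))
    = C (1 / 2 : ℂ) * lform 1 s ^ d + C (1 / 2 : ℂ) * lform 1 (-s) ^ d := by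
  set F : ℕ → MvPolynomial (Fin 2) ℂ := fun k =>
    monomial (Finsupp.single (0:Fin 2) k + Finsupp.single 1 (d-k))
      ((d.choose k : ℂ) * ((s ^ (d-k) + (-s) ^ (d-k))/2)) with hF
  have key : ∀ k, C (1/2 : ℂ) * (C ((d.choose k : ℂ) * 1 ^ k * s ^ (d-k)) * X 0 ^ k * X 1 ^ (d-k))
      + C (1/2 : ℂ) * (C ((d.choose k : ℂ) * 1 ^ k * (-s) ^ (d-k)) * X 0 ^ k * X 1 ^ (d-k))
      = F k := by
    intro k
    rw [hF, CXpow, CXpow, C_mul_monomial, C_mul_monomial, ← map_add]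
    congr 1
    ring
  rw [lform_pow, lform_pow, Finset.mul_sum, Finset.mul_sum, ← Finset.sum_add_distrib,
    Finset.sum_congr rfl (fun k _ => key k)]
  have himage : ∀ i ∈ range (d/2+1), F (d - 2*i)
      = C ((d.choose (2 * i) : ℂ) * (γ : ℂ) ^ i) * X 0 ^ (d - 2 * i) * X 1 ^ (2 * i) := by
    intro i hi
    have h2i : 2*i ≤ d := by
      have := Finset.mem_range.mp hi; omega
    have h1 : d - (d - 2*i) = 2*i := by omega
    rw [hF, CXpow]
    simp only [h1]
    congr 1
    rw [Nat.choose_symm h2i]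
    have hns : (-s)^(2*i) = s^(2*i) := by
      rw [neg_pow, Even.neg_one_pow ⟨i, by ring⟩, one_mul]
    rw [hns, pow_mul, hs]
    ring
  rw [← Finset.sum_congr rfl himage]
  have hinj : ∀ x ∈ range (d/2+1), ∀ y ∈ range (d/2+1),
      d - 2*x = d - 2*y → x = y := by
    intro x hx y hy hxy
    have := Finset.mem_range.mp hx
    have := Finset.mem_range.mp hy
    omega
  rw [← Finset.sum_image hinj]
  apply Finset.sum_subset
  · intro k hk
    obtain ⟨i, hi, rfl⟩ := Finset.mem_image.mp hk
    exact Finset.mem_range.mpr (by omega)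
  · intro k hk hnk
    have hodd : ¬ Even (d - k) := by
      intro ⟨r, hr⟩
      apply hnk
      refine Finset.mem_image.mpr ⟨r, Finset.mem_range.mpr (by omega), by
        have := Finset.mem_range.mp hk; omega⟩
    have : (-s) ^ (d - k) = -(s ^ (d-k)) := Odd.neg_pow (Nat.not_even_iff_odd.mp hodd) s
    rw [hF]
    simp only [this]
    rw [show s ^ (d-k) + -(s^(d-k)) = 0 by ring]
    simp

lemma coeff_p (d : ℕ) (s : ℂ) (q : MvPolynomial (Fin 2) ℂ)
    (hq : q = C (1 / 2 : ℂ) * lform 1 s ^ d + C (1 / 2 : ℂ) * lform 1 (-s) ^ d)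
    (t : ℕ) (ht : t ≤ d) :
    coeff (Finsupp.single 0 (d-t) + Finsupp.single 1 t) q
      = (d.choose t : ℂ) * ((s ^ t + (-s) ^ t)/2) := by
  rw [hq, coeff_add, coeff_lp _ _ _ _ _ ht, coeff_lp _ _ _ _ _ ht]
  ring

lemma not_rank_one (γ : ℚ) (hγ0 : (γ:ℂ) ≠ 0) (d : ℕ) (hd : 3 ≤ d) (g : ℂ)
    (hg : g ^ 2 = (γ : ℂ)) (p : MvPolynomial (Fin 2) ℂ)
    (hp1 : p = C (1 / 2 : ℂ) * lform 1 g ^ d + C (1 / 2 : ℂ) * lform 1 (-g) ^ d) :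
    ∀ c a b : ℂ, p ≠ C c * lform a b ^ d := by
  intro c a b heq
  have h0 := congrArg (coeff (Finsupp.single 0 (d-0) + Finsupp.single 1 0)) heq
  have h1 := congrArg (coeff (Finsupp.single 0 (d-1) + Finsupp.single 1 1)) heq
  have h2 := congrArg (coeff (Finsupp.single 0 (d-2) + Finsupp.single 1 2)) heq
  rw [coeff_p d g p hp1 0 (by omega), coeff_lp _ _ _ _ _ (by omega)] at h0
  rw [coeff_p d g p hp1 1 (by omega), coeff_lp _ _ _ _ _ (by omega)] at h1
  rw [coeff_p d g p hp1 2 (by omega), coeff_lp _ _ _ _ _ (by omega)] at h2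
  simp only [pow_zero, pow_one, Nat.choose_zero_right, Nat.choose_one_right,
    Nat.cast_one, mul_one, one_mul] at h0 h1 h2
  -- h0 : (1 + 1)/2 = c * a ^ (d-0) * 1  → 1 = c * a^d
  have h0' : (1:ℂ) = c * a ^ (d - 0) := by linear_combination h0
  have hc : c ≠ 0 := by rintro rfl; simp at h0'
  have ha : a ≠ 0 := by
    rintro rfl
    rw [zero_pow (by omega)] at h0'; simp at h0'
  have hb : b = 0 := by
    have hd0 : (d:ℂ) ≠ 0 := Nat.cast_ne_zero.mpr (by omega)
    have h1' : (d:ℂ) * ((g + -g)/2) = c * (d:ℂ) * a ^ (d-1) * b := h1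
    rw [show (g + -g)/2 = 0 by ring, mul_zero] at h1'
    have := h1'.symm
    rcases mul_eq_zero.mp this with h | h
    · rcases mul_eq_zero.mp h with h' | h'
      · rcases mul_eq_zero.mp h' with h'' | h''
        · exact absurd h'' hc
        · exact absurd h'' hd0
      · exact absurd h' (pow_ne_zero _ ha)
    · exact h
  rw [hb] at h2
  have hch : ((d.choose 2 : ℕ) : ℂ) ≠ 0 :=
    Nat.cast_ne_zero.mpr (Nat.choose_pos (by omega)).ne'
  have hgg : (-g)^2 = g^2 := by ring
  rw [hgg, hg, zero_pow (by norm_num), mul_zero] at h2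
  rcases mul_eq_zero.mp h2 with h | h
  · exact absurd h hch
  · exact hγ0 (by linear_combination h)

noncomputable def dop (g : ℂ) (q : MvPolynomial (Fin 2) ℂ) : MvPolynomial (Fin 2) ℂ :=
  C (g^2) * pderiv 0 (pderiv 0 q) - pderiv 1 (pderiv 1 q)

lemma dop_add (g : ℂ) (q r : MvPolynomial (Fin 2) ℂ) :
    dop g (q + r) = dop g q + dop g r := by
  simp [dop]; ring

lemma pd_lform (a b : ℂ) :
    pderiv (0:Fin 2) (lform a b) = C a ∧ pderiv (1:Fin 2) (lform a b) = C b := by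
  constructor
  · simp [lform, pderiv_X_self, pderiv_X_of_ne (show (1:Fin 2) ≠ 0 by decide)]
  · simp [lform, pderiv_X_self, pderiv_X_of_ne (show (0:Fin 2) ≠ 1 by decide)]

lemma pd_lpow (i : Fin 2) (a b : ℂ) (n : ℕ) :
    pderiv i (lform a b ^ n)
      = C ((n:ℂ) * (if i = 0 then a else b)) * lform a b ^ (n-1) := by
  rw [Derivation.leibniz_pow]
  have h : pderiv i (lform a b) = C (if i = 0 then a else b) := by
    fin_cases i
    · simpa using (pd_lform a b).1
    · simpa using (pd_lform a b).2
  rw [h, smul_eq_mul, nsmul_eq_mul, C_mul, ← C_eq_coe_nat]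
  ring

lemma dop_pow (g : ℂ) (a b c : ℂ) (n : ℕ) (hn : 2 ≤ n) :
    dop g (C c * lform a b ^ n)
      = C (c * (n:ℂ) * ((n-1:ℕ):ℂ) * (g^2*a^2 - b^2)) * lform a b ^ (n-2) := by
  rw [dop, pderiv_C_mul, pderiv_C_mul, pd_lpow, pderiv_C_mul, pd_lpow,
    pderiv_C_mul, pderiv_C_mul, pd_lpow, pderiv_C_mul, pd_lpow]
  simp only [eq_self_iff_true, if_true, if_neg (by decide : ¬ (1:Fin 2) = 0)]
  rw [show n - 1 - 1 = n - 2 by omega]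
  simp only [← mul_assoc, ← C_mul]
  rw [← sub_mul, ← C_sub]
  congr 2
  ring

lemma dop_p (d : ℕ) (hd : 3 ≤ d) (g : ℂ) (p : MvPolynomial (Fin 2) ℂ)
    (hp1 : p = C (1/2:ℂ) * lform 1 g ^ d + C (1/2:ℂ) * lform 1 (-g) ^ d) :
    dop g p = 0 := by
  rw [hp1, dop_add, dop_pow _ _ _ _ _ (by omega), dop_pow _ _ _ _ _ (by omega)]
  rw [show g^2*1^2 - g^2 = 0 by ring, show g^2*(1:ℂ)^2 - (-g)^2 = 0 by ring]
  simp

lemma lform_eq_zero {a b : ℂ} (h : lform a b = 0) : a = 0 ∧ b = 0 := by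
  constructor
  · have h1 := congrArg (eval fun i : Fin 2 => if i = 0 then (1:ℂ) else 0) h
    simpa [lform] using h1
  · have h1 := congrArg (eval fun i : Fin 2 => if i = 0 then (0:ℂ) else 1) h
    simpa [lform] using h1

lemma lform_smul_s7 (μ u v : ℂ) : C μ * lform u v = lform (μ*u) (μ*v) := by
  simp only [lform, C_mul]; ring

lemma prop_of_sum (e : ℕ) (he : 1 ≤ e) (c0 c1 a0 b0 a1 b1 : ℂ)
    (hsum : C c0 * lform a0 b0 ^ e + C c1 * lform a1 b1 ^ e = 0)
    (hc0 : c0 ≠ 0) (hc1 : c1 ≠ 0) :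
    ∃ μ : ℂ, lform a1 b1 = C μ * lform a0 b0 := by
  obtain ⟨e', rfl⟩ : ∃ e', e = e' + 1 := ⟨e - 1, by omega⟩
  have E0 := congrArg (coeff (Finsupp.single 0 (e'+1-0) + Finsupp.single 1 0)) hsum
  have E1 := congrArg (coeff (Finsupp.single 0 (e'+1-1) + Finsupp.single 1 1)) hsum
  have Ee := congrArg (coeff (Finsupp.single 0 (e'+1-(e'+1)) + Finsupp.single 1 (e'+1))) hsum
  rw [coeff_add, coeff_lp _ _ _ _ _ (by omega), coeff_lp _ _ _ _ _ (by omega), coeff_zero] at E0 E1 Ee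
  simp only [Nat.choose_zero_right, Nat.choose_one_right, Nat.choose_self, Nat.cast_one,
    Nat.add_sub_cancel, Nat.sub_zero, Nat.sub_self, pow_zero, pow_one, mul_one, one_mul] at E0 E1 Ee
  by_cases ha0 : a0 = 0
  · subst ha0
    by_cases hb0 : b0 = 0
    · subst hb0
      refine ⟨0, ?_⟩
      have hl0 : lform 0 0 = (0 : MvPolynomial (Fin 2) ℂ) := by simp [lform]
      rw [hl0, zero_pow (by omega), mul_zero, zero_add] at hsum
      have : lform a1 b1 ^ (e'+1) = 0 := by
        rcases mul_eq_zero.mp hsum with h | h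
        · exact absurd (by simpa using h) hc1
        · exact h
      have := pow_eq_zero_iff (by omega : e'+1 ≠ 0) |>.mp this
      rw [this, hl0, mul_zero]
    · -- a0 = 0, b0 ≠ 0 : from E0, a1 = 0
      have hz : (0:ℂ) ^ (e'+1) = 0 := zero_pow (by omega)
      rw [hz, mul_zero, zero_add] at E0
      have ha1 : a1 = 0 := by
        have := mul_eq_zero.mp E0
        rcases this with h | h
        · exact absurd h hc1
        · exact pow_eq_zero_iff (by omega : e'+1 ≠ 0) |>.mp h
      subst ha1
      refine ⟨b1 / b0, ?_⟩
      rw [lform_smul_s7]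
      rw [mul_zero, div_mul_cancel₀ _ hb0]
  · -- a0 ≠ 0
    have ha1 : a1 ≠ 0 := by
      intro h
      rw [h, zero_pow (by omega : e'+1 ≠ 0), mul_zero, add_zero] at E0
      rcases mul_eq_zero.mp E0 with h' | h'
      · exact hc0 h'
      · exact ha0 (pow_eq_zero_iff (by omega : e'+1 ≠ 0) |>.mp h')
    have key : c0 * ((e'+1:ℕ):ℂ) * a0^e' * (b0 * a1 - a0 * b1) = 0 := by
      push_cast
      push_cast at E0 E1
      linear_combination a1 * E1 - ((e':ℂ)+1) * b1 * E0
    have hb : b0 * a1 - a0 * b1 = 0 := by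
      have hne : c0 * ((e'+1:ℕ):ℂ) * a0^e' ≠ 0 := by
        apply mul_ne_zero (mul_ne_zero hc0 _) (pow_ne_zero _ ha0)
        exact Nat.cast_ne_zero.mpr (by omega)
      rcases mul_eq_zero.mp key with h | h
      · exact absurd h hne
      · exact h
    refine ⟨a1 / a0, ?_⟩
    rw [lform_smul_s7, div_mul_cancel₀ _ ha0]
    congr 1
    field_simp
    linear_combination -hb

lemma fin2cases (j : Fin 2) : j = 0 ∨ j = 1 := by
  rcases j with ⟨jv, hj⟩
  interval_cases jv
  · left; rfl
  · right; rfl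

lemma uniq (γ : ℚ) (hγ0 : (γ:ℂ) ≠ 0) (d : ℕ) (hd : 3 ≤ d) (g : ℂ)
    (hg : g ^ 2 = (γ:ℂ)) (p : MvPolynomial (Fin 2) ℂ)
    (hp1 : p = C (1/2:ℂ) * lform 1 g ^ d + C (1/2:ℂ) * lform 1 (-g) ^ d) :
    ∀ lam a b : Fin 2 → ℂ, p = ∑ j, C (lam j) * lform (a j) (b j) ^ d →
      ∃ σ : Equiv.Perm (Fin 2), ∀ j, ∃ c : ℂ, c ≠ 0 ∧
        a j = c ∧ b j = c * (if σ j = 0 then g else -g) := by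
  intro lam a b hrep
  rw [Fin.sum_univ_two] at hrep
  have hn1 := not_rank_one γ hγ0 d hd g hg p hp1
  have hg0 : g ≠ 0 := by
    rintro rfl; exact hγ0 (by rw [← hg]; ring)
  have hlam0 : lam 0 ≠ 0 := by
    rintro h; rw [h] at hrep; simp only [map_zero, zero_mul, zero_add] at hrep
    exact hn1 _ _ _ hrep
  have hlam1 : lam 1 ≠ 0 := by
    rintro h; rw [h] at hrep; simp only [map_zero, zero_mul, add_zero] at hrep
    exact hn1 _ _ _ hrep
  -- single-power collapse helper
  have collapse : ∀ j : Fin 2, ¬ (a j = 0 ∧ b j = 0) := by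
    intro j ⟨haj, hbj⟩
    have hl0 : lform (a j) (b j) = 0 := by rw [haj, hbj]; simp [lform]
    rcases fin2cases j with rfl | rfl
    · rw [hl0, zero_pow (by omega : d ≠ 0), mul_zero, zero_add] at hrep
      exact hn1 _ _ _ hrep
    · rw [hl0, zero_pow (by omega : d ≠ 0), mul_zero, add_zero] at hrep
      exact hn1 _ _ _ hrep
  -- apply the operator
  have hD : (0 : MvPolynomial (Fin 2) ℂ)
      = C ((d:ℂ) * ((d-1:ℕ):ℂ)) *
        (C (lam 0 * (g^2*(a 0)^2 - (b 0)^2)) * lform (a 0) (b 0) ^ (d-2)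
         + C (lam 1 * (g^2*(a 1)^2 - (b 1)^2)) * lform (a 1) (b 1) ^ (d-2)) := by
    have h := congrArg (dop g) hrep
    rw [dop_p d hd g p hp1, dop_add, dop_pow _ _ _ _ _ (by omega),
      dop_pow _ _ _ _ _ (by omega)] at h
    rw [h, mul_add, ← mul_assoc, ← mul_assoc, ← C_mul, ← C_mul]
    congr 3 <;> ring
  have hdd : (C ((d:ℂ) * ((d-1:ℕ):ℂ)) : MvPolynomial (Fin 2) ℂ) ≠ 0 := by
    rw [Ne, MvPolynomial.C_eq_zero]
    exact mul_ne_zero (Nat.cast_ne_zero.mpr (by omega)) (Nat.cast_ne_zero.mpr (by omega))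
  have hDD : C (lam 0 * (g^2*(a 0)^2 - (b 0)^2)) * lform (a 0) (b 0) ^ (d-2)
      + C (lam 1 * (g^2*(a 1)^2 - (b 1)^2)) * lform (a 1) (b 1) ^ (d-2) = 0 :=
    (mul_eq_zero.mp hD.symm).resolve_left hdd
  by_cases hw : (g^2*(a 0)^2 - (b 0)^2) = 0 ∧ (g^2*(a 1)^2 - (b 1)^2) = 0
  · obtain ⟨hw0, hw1⟩ := hw
    have haj : ∀ j : Fin 2, a j ≠ 0 := by
      intro j haj
      have hwj : g^2*(a j)^2 - (b j)^2 = 0 := by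
        rcases fin2cases j with rfl | rfl <;> assumption
      rw [haj] at hwj
      have : b j = 0 := by
        have : (b j)^2 = 0 := by linear_combination -hwj
        exact pow_eq_zero_iff (by norm_num) |>.mp this
      exact collapse j ⟨haj, this⟩
    have hsgn : ∀ j : Fin 2, b j = a j * g ∨ b j = a j * (-g) := by
      intro j
      have hwj : g^2*(a j)^2 - (b j)^2 = 0 := by
        rcases fin2cases j with rfl | rfl <;> assumption
      have : (b j - a j * g) * (b j + a j * g) = 0 := by linear_combination -hwj
      rcases mul_eq_zero.mp this with h | h
      · left; linear_combination h
      · right; linear_combination h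
    -- rule out equal signs
    have hne : ∀ s : ℂ, b 0 = a 0 * s → b 1 = a 1 * s → False := by
      intro s h0 h1
      have e0 : lform (a 0) (b 0) = C (a 0) * lform 1 s := by
        rw [h0, lform_smul_s7, mul_one]
      have e1 : lform (a 1) (b 1) = C (a 1) * lform 1 s := by
        rw [h1, lform_smul_s7, mul_one]
      rw [e0, e1, mul_pow, mul_pow, ← C_pow, ← C_pow, ← mul_assoc, ← mul_assoc,
        ← C_mul, ← C_mul, ← add_mul, ← C_add] at hrep
      exact hn1 _ _ _ hrep
    rcases hsgn 0 with h0 | h0 <;> rcases hsgn 1 with h1 | h1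
    · exact absurd h1 (fun h1 => hne g h0 h1)
    · refine ⟨Equiv.refl _, fun j => ?_⟩
      rcases fin2cases j with rfl | rfl
      · exact ⟨a 0, haj 0, rfl, by simpa using h0⟩
      · exact ⟨a 1, haj 1, rfl, by simpa using h1⟩
    · refine ⟨Equiv.swap 0 1, fun j => ?_⟩
      rcases fin2cases j with rfl | rfl
      · refine ⟨a 0, haj 0, rfl, ?_⟩
        rw [if_neg (by simp [Equiv.swap_apply_left])]
        simpa using h0
      · refine ⟨a 1, haj 1, rfl, ?_⟩
        rw [if_pos (by simp [Equiv.swap_apply_right])]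
        simpa using h1
    · exact absurd h1 (fun h1 => hne (-g) h0 h1)
  · exfalso
    by_cases hw0 : g^2*(a 0)^2 - (b 0)^2 = 0
    · have hw1 : g^2*(a 1)^2 - (b 1)^2 ≠ 0 := fun h => hw ⟨hw0, h⟩
      rw [hw0, mul_zero, map_zero, zero_mul, zero_add] at hDD
      have hc1 : (C (lam 1 * (g^2*(a 1)^2 - (b 1)^2)) : MvPolynomial (Fin 2) ℂ) ≠ 0 := by
        rw [Ne, MvPolynomial.C_eq_zero]
        exact mul_ne_zero hlam1 hw1
      have hLz : lform (a 1) (b 1) ^ (d-2) = 0 := (mul_eq_zero.mp hDD).resolve_left hc1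
      have := lform_eq_zero (pow_eq_zero_iff (by omega : d - 2 ≠ 0) |>.mp hLz)
      exact collapse 1 this
    · by_cases hw1 : g^2*(a 1)^2 - (b 1)^2 = 0
      · rw [hw1, mul_zero, map_zero, zero_mul, add_zero] at hDD
        have hc0 : (C (lam 0 * (g^2*(a 0)^2 - (b 0)^2)) : MvPolynomial (Fin 2) ℂ) ≠ 0 := by
          rw [Ne, MvPolynomial.C_eq_zero]
          exact mul_ne_zero hlam0 hw0
        have hLz : lform (a 0) (b 0) ^ (d-2) = 0 := (mul_eq_zero.mp hDD).resolve_left hc0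
        have := lform_eq_zero (pow_eq_zero_iff (by omega : d - 2 ≠ 0) |>.mp hLz)
        exact collapse 0 this
      · obtain ⟨μ, hμ⟩ := prop_of_sum (d-2) (by omega) _ _ _ _ _ _ hDD
          (mul_ne_zero hlam0 hw0) (mul_ne_zero hlam1 hw1)
        rw [hμ, mul_pow, ← C_pow, ← mul_assoc, ← C_mul, ← add_mul, ← C_add] at hrep
        exact hn1 _ _ _ hrep


/-- For `γ ∈ ℚ` with no rational square root and `g` a complex square root of `γ`,
the form `p_d = Σ (d choose 2i) γ^i x^(d-2i) y^(2i)` equals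
`(1/2)(x + g y)^d + (1/2)(x - g y)^d`, has Waring rank 2, this length-2 representation
is unique up to order and scaling, and for any subfield `K ⊆ ℂ`, `L_K(p_d) = 2` iff a
square root of `γ` lies in `K`. -/
theorem rational_rank_two_example (γ : ℚ) (hγ : ¬ ∃ q : ℚ, q ^ 2 = γ)
    (d : ℕ) (hd : 3 ≤ d) (g : ℂ) (hg : g ^ 2 = (γ : ℂ))
    (p : MvPolynomial (Fin 2) ℂ)
    (hp : p = ∑ i ∈ range (d / 2 + 1),
      C ((d.choose (2 * i) : ℂ) * (γ : ℂ) ^ i) * X 0 ^ (d - 2 * i) * X 1 ^ (2 * i)) :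
    p = C (1 / 2 : ℂ) * lform 1 g ^ d + C (1 / 2 : ℂ) * lform 1 (-g) ^ d ∧
    rankC d p = 2 ∧
    (∀ lam a b : Fin 2 → ℂ, p = ∑ j, C (lam j) * lform (a j) (b j) ^ d →
      ∃ σ : Equiv.Perm (Fin 2), ∀ j, ∃ c : ℂ, c ≠ 0 ∧
        a j = c ∧ b j = c * (if σ j = 0 then g else -g)) ∧
    (∀ K : Subfield ℂ, rankIn K d p = 2 ↔ (∃ s ∈ K, s ^ 2 = (γ : ℂ))) := by
  have hγ0 : (γ:ℂ) ≠ 0 := by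
    intro h
    apply hγ
    refine ⟨0, ?_⟩
    have : γ = 0 := by exact_mod_cast h
    rw [this]; norm_num
  have hp1 : p = C (1/2:ℂ) * lform 1 g ^ d + C (1/2:ℂ) * lform 1 (-g) ^ d := by
    rw [hp]; exact psum d γ g hg
  have hn1 := not_rank_one γ hγ0 d hd g hg p hp1
  have lower : ∀ r : ℕ, (∃ lam a b : Fin r → ℂ,
      p = ∑ j, C (lam j) * lform (a j) (b j) ^ d) → 2 ≤ r := by
    intro r hr
    by_contra hlt
    interval_cases r
    · obtain ⟨lam, a, b, h⟩ := hr
      rw [Fin.sum_univ_zero] at h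
      exact hn1 0 1 1 (by rw [h]; simp)
    · obtain ⟨lam, a, b, h⟩ := hr
      rw [Fin.sum_univ_one] at h
      exact hn1 _ _ _ h
  have two_mem : ∀ (s : ℂ), s ^ 2 = (γ:ℂ) → ∃ lam a b : Fin 2 → ℂ,
      (∀ j, lam j = 1/2 ∧ a j = 1) ∧ b 0 = s ∧ b 1 = -s ∧
      p = ∑ j, C (lam j) * lform (a j) (b j) ^ d := by
    intro s hs
    refine ⟨fun _ => 1/2, fun _ => 1, ![s, -s], fun j => ⟨rfl, rfl⟩, rfl, rfl, ?_⟩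
    rw [Fin.sum_univ_two]
    show p = C (1/2:ℂ) * lform 1 (![s,-s] 0) ^ d + C (1/2:ℂ) * lform 1 (![s,-s] 1) ^ d
    simp only [Matrix.cons_val_zero, Matrix.cons_val_one, Matrix.head_cons]
    rw [hp]; exact psum d γ s hs
  refine ⟨hp1, ?_, uniq γ hγ0 d hd g hg p hp1, ?_⟩
  · -- rankC
    have h2 : 2 ∈ {r : ℕ | ∃ lam a b : Fin r → ℂ,
        p = ∑ j, C (lam j) * lform (a j) (b j) ^ d} := by
      obtain ⟨lam, a, b, _, _, _, hrep⟩ := two_mem g hg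
      exact ⟨lam, a, b, hrep⟩
    refine le_antisymm (Nat.sInf_le h2) ?_
    obtain ⟨lam, a, b, hrep⟩ := Nat.sInf_mem (⟨2, h2⟩ : Set.Nonempty _)
    exact lower _ ⟨lam, a, b, hrep⟩
  · intro K
    constructor
    · intro hrk
      have hne : Set.Nonempty {r : ℕ | ∃ lam a b : Fin r → ℂ,
          (∀ j, lam j ∈ K ∧ a j ∈ K ∧ b j ∈ K) ∧
          p = ∑ j, C (lam j) * lform (a j) (b j) ^ d} := by
        by_contra hne
        rw [Set.not_nonempty_iff_eq_empty] at hne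
        rw [rankIn, hne, Nat.sInf_empty] at hrk
        exact two_ne_zero hrk.symm
      have hmem2 := Nat.sInf_mem hne
      rw [show sInf _ = rankIn K d p from rfl, hrk] at hmem2
      obtain ⟨lam, a, b, hK, hrep⟩ := hmem2
      obtain ⟨σ, hσ⟩ := uniq γ hγ0 d hd g hg p hp1 lam a b hrep
      set j := σ.symm 0 with hj
      obtain ⟨c, hc, hac, hbc⟩ := hσ j
      rw [if_pos (by rw [hj, Equiv.apply_symm_apply])] at hbc
      refine ⟨b j / a j, div_mem (hK j).2.2 (hK j).2.1, ?_⟩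
      rw [hac, hbc, mul_div_cancel_left₀ _ hc, hg]
    · rintro ⟨s, hsK, hs⟩
      obtain ⟨lam, a, b, hhalf, hb0, hb1, hrep⟩ := two_mem s hs
      have h2 : 2 ∈ {r : ℕ | ∃ lam a b : Fin r → ℂ,
          (∀ j, lam j ∈ K ∧ a j ∈ K ∧ b j ∈ K) ∧
          p = ∑ j, C (lam j) * lform (a j) (b j) ^ d} := by
        refine ⟨lam, a, b, fun j => ⟨?_, ?_, ?_⟩, hrep⟩
        · rw [(hhalf j).1]
          have : ((1/2 : ℚ) : ℂ) ∈ K := SubfieldClass.ratCast_mem K (1/2)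
          simpa using this
        · rw [(hhalf j).2]; exact one_mem K
        · rcases fin2cases j with rfl | rfl
          · rw [hb0]; exact hsK
          · rw [hb1]; exact neg_mem hsK
      refine le_antisymm (Nat.sInf_le h2) ?_
      obtain ⟨lam', a', b', _, hrep'⟩ := Nat.sInf_mem (⟨2, h2⟩ : Set.Nonempty _)
      exact lower _ ⟨lam', a', b', hrep'⟩
end

section
/- Let f(x,y) ∈ ℂ[x,y] be a nonzero binary form of degree d with factorization f = Π_{i=0}^{r} ℓ_i(x,y)^{m_i}, where r ≥ 1 and the ℓ_i are pairwise nonproportional linear forms. Then L_ℂ(f) ≥ max(m_0, …, m_r) + 1. -/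
open MvPolynomial Finset

noncomputable def Tder (α β : ℂ) : Derivation ℂ (MvPolynomial (Fin 2) ℂ) (MvPolynomial (Fin 2) ℂ) :=
  β • pderiv 0 - α • pderiv 1

lemma Tder_lform (α β a c : ℂ) : Tder α β (lform a c) = C (a * β - c * α) := by
  simp [Tder, lform, smul_eq_C_mul]; ring

lemma Tder_C_mul_pow (α β e' a c : ℂ) (k' : ℕ) :
    Tder α β (C e' * lform a c ^ k') =
      C (e' * (k' * (a * β - c * α))) * lform a c ^ (k' - 1) := by
  rw [← smul_eq_C_mul, Derivation.map_smul, Derivation.leibniz_pow, Tder_lform]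
  rw [smul_eq_C_mul, nsmul_eq_mul, smul_eq_mul]
  rw [show ((k' : MvPolynomial (Fin 2) ℂ)) = C (k' : ℂ) by rfl]
  rw [C_mul, C_mul]
  ring

lemma Tder_pow_mul (α β a c : ℂ) (k : ℕ) (v : MvPolynomial (Fin 2) ℂ) :
    Tder α β (lform a c ^ (k + 1) * v) =
      C ((k + 1) * (a * β - c * α)) * (lform a c ^ k * v)
        + lform a c ^ (k + 1) * Tder α β v := by
  rw [Derivation.leibniz, Derivation.leibniz_pow, Tder_lform]
  rw [smul_eq_mul, smul_eq_mul, nsmul_eq_mul]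
  rw [show (((k+1 : ℕ) : MvPolynomial (Fin 2) ℂ)) = C ((k+1 : ℕ) : ℂ) by rfl]
  push_cast
  rw [C_mul]
  rw [smul_eq_mul]
  ring

lemma Tder_C_mul (α β c : ℂ) (p : MvPolynomial (Fin 2) ℂ) :
    Tder α β (C c * p) = C c * Tder α β p := by
  rw [← smul_eq_C_mul, Derivation.map_smul, smul_eq_C_mul]

noncomputable def applyOps (L : List (ℂ × ℂ)) (p : MvPolynomial (Fin 2) ℂ) :
    MvPolynomial (Fin 2) ℂ :=
  L.foldr (fun ab q => Tder ab.1 ab.2 q) p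

@[simp] lemma applyOps_nil (p : MvPolynomial (Fin 2) ℂ) : applyOps [] p = p := rfl

@[simp] lemma applyOps_cons (ab : ℂ × ℂ) (L : List (ℂ × ℂ)) (p : MvPolynomial (Fin 2) ℂ) :
    applyOps (ab :: L) p = Tder ab.1 ab.2 (applyOps L p) := rfl

lemma applyOps_sum {ι : Type*} (L : List (ℂ × ℂ)) (s : Finset ι)
    (h : ι → MvPolynomial (Fin 2) ℂ) :
    applyOps L (∑ j ∈ s, h j) = ∑ j ∈ s, applyOps L (h j) := by
  induction L with
  | nil => simp
  | cons ab L ih => simp [ih, map_sum]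

lemma applyOps_pow_form (a c : ℂ) (L : List (ℂ × ℂ)) :
    ∀ (e : ℂ) (k : ℕ), ∃ e' k', applyOps L (C e * lform a c ^ k) = C e' * lform a c ^ k' := by
  induction L with
  | nil => intro e k; exact ⟨e, k, rfl⟩
  | cons ab L ih =>
    intro e k
    obtain ⟨e', k', h⟩ := ih e k
    exact ⟨_, _, by rw [applyOps_cons, h, Tder_C_mul_pow]⟩

lemma applyOps_kill (a c : ℂ) (L : List (ℂ × ℂ)) (hmem : (a, c) ∈ L) (e : ℂ) (k : ℕ) :
    applyOps L (C e * lform a c ^ k) = 0 := by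
  induction L with
  | nil => simp at hmem
  | cons ab L ih =>
    rcases List.mem_cons.1 hmem with h | h
    · obtain ⟨e', k', hh⟩ := applyOps_pow_form a c L e k
      rw [applyOps_cons, hh, ← h, Tder_C_mul_pow]
      have : a * c - c * a = 0 := by ring
      rw [this]
      simp
    · rw [applyOps_cons, ih h, map_zero]

lemma applyOps_key (a0 b0 : ℂ) (v : MvPolynomial (Fin 2) ℂ) :
    ∀ (L : List (ℂ × ℂ)) (M : ℕ), L.length ≤ M →
      (∀ ab ∈ L, a0 * ab.2 - b0 * ab.1 ≠ 0) →
      ∃ (c : ℂ) (w : MvPolynomial (Fin 2) ℂ), c ≠ 0 ∧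
        applyOps L (lform a0 b0 ^ M * v) =
          C c * (lform a0 b0 ^ (M - L.length) * v)
            + lform a0 b0 ^ (M - L.length + 1) * w := by
  intro L
  induction L with
  | nil => intro M _ _; exact ⟨1, 0, one_ne_zero, by simp⟩
  | cons ab L ih =>
    intro M hlen hcond
    have hlen' : L.length ≤ M := by simp at hlen; omega
    obtain ⟨c, w, hc, hIH⟩ := ih M hlen' (fun x hx => hcond x (List.mem_cons_of_mem _ hx))
    set k1 : ℕ := M - (ab :: L).length with hk1
    have hk : M - L.length = k1 + 1 := by simp [hk1]; simp at hlen; omega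
    have hc1 : a0 * ab.2 - b0 * ab.1 ≠ 0 := hcond ab List.mem_cons_self
    refine ⟨c * ((k1 + 1) * (a0 * ab.2 - b0 * ab.1)),
      C c * Tder ab.1 ab.2 v + C ((k1 + 2) * (a0 * ab.2 - b0 * ab.1)) * w
        + lform a0 b0 * Tder ab.1 ab.2 w, ?_, ?_⟩
    · exact mul_ne_zero hc (mul_ne_zero (Nat.cast_add_one_ne_zero k1) hc1)
    · rw [applyOps_cons, hIH, map_add, hk, Tder_C_mul, Tder_pow_mul,
        show k1 + 1 + 1 = (k1 + 1) + 1 from rfl, Tder_pow_mul]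
      simp only [C_add, C_mul, C_sub, C_1, Nat.cast_add, Nat.cast_one, Nat.cast_ofNat, map_ofNat]
      ring

noncomputable def Vspan (d : ℕ) : Submodule ℂ (MvPolynomial (Fin 2) ℂ) :=
  Submodule.span ℂ {p | ∃ a b : ℂ, p = lform a b ^ d}

lemma lform_pow_expand (d : ℕ) (t : ℂ) :
    lform 1 t ^ d = ∑ j : Fin (d + 1),
      (t ^ (j : ℕ)) • (C ((d.choose (j : ℕ) : ℕ) : ℂ) * (X 0 ^ (d - (j : ℕ)) * X 1 ^ (j : ℕ))) := by
  have : lform 1 t = C t * X 1 + X 0 := by simp [lform]; ring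
  rw [this, add_pow, ← Fin.sum_univ_eq_sum_range]
  refine Finset.sum_congr rfl fun j _ => ?_
  rw [mul_pow, ← C_pow, smul_eq_C_mul,
    show ((d.choose (j : ℕ) : ℕ) : MvPolynomial (Fin 2) ℂ) = C ((d.choose (j : ℕ) : ℕ) : ℂ) from rfl]
  ring

lemma monomial_mem_Vspan (d j : ℕ) (hj : j ≤ d) :
    X 0 ^ (d - j) * X 1 ^ j ∈ Vspan d := by
  classical
  set v : Fin (d + 1) → ℂ := fun i => ((i : ℕ) : ℂ) with hv
  set W : Matrix (Fin (d + 1)) (Fin (d + 1)) ℂ := Matrix.vandermonde v with hW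
  have hdet : W.det ≠ 0 := by
    rw [hW, Matrix.det_vandermonde]
    refine Finset.prod_ne_zero_iff.2 fun i _ => Finset.prod_ne_zero_iff.2 fun k hk => ?_
    have hik : i < k := Finset.mem_Ioi.1 hk
    intro h
    have h2 : ((k : ℕ) : ℂ) = ((i : ℕ) : ℂ) := sub_eq_zero.1 h
    have h3 : (k : ℕ) = (i : ℕ) := by exact_mod_cast h2
    exact absurd h3 (Fin.lt_def.1 hik).ne'
  set B := W⁻¹ with hB
  have hBW : B * W = 1 := Matrix.nonsing_inv_mul W (isUnit_iff_ne_zero.2 hdet)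
  set q : Fin (d + 1) → MvPolynomial (Fin 2) ℂ := fun j =>
    C ((d.choose (j : ℕ) : ℕ) : ℂ) * (X 0 ^ (d - (j : ℕ)) * X 1 ^ (j : ℕ)) with hq
  have hqmem : ∀ j : Fin (d + 1), q j ∈ Vspan d := by
    intro j
    have key : q j = ∑ i : Fin (d + 1), B j i • (lform 1 (v i) ^ d) := by
      have expand : ∀ i : Fin (d + 1), lform 1 (v i) ^ d = ∑ k : Fin (d + 1), W i k • q k := by
        intro i
        rw [lform_pow_expand d (v i)]
        exact Finset.sum_congr rfl fun k _ => by rw [hW, Matrix.vandermonde]; rfl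
      calc q j = ∑ k : Fin (d + 1), ((B * W) j k) • q k := by
            rw [hBW]
            simp [Matrix.one_apply, ite_smul]
        _ = ∑ k : Fin (d + 1), ∑ i : Fin (d + 1), (B j i * W i k) • q k := by
            refine Finset.sum_congr rfl fun k _ => ?_
            rw [Matrix.mul_apply, Finset.sum_smul]
        _ = ∑ i : Fin (d + 1), ∑ k : Fin (d + 1), (B j i * W i k) • q k := Finset.sum_comm
        _ = ∑ i : Fin (d + 1), B j i • (lform 1 (v i) ^ d) := by
            refine Finset.sum_congr rfl fun i _ => ?_
            rw [expand i, Finset.smul_sum]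
            exact Finset.sum_congr rfl fun k _ => by rw [mul_smul]
    rw [key]
    exact Submodule.sum_mem _ fun i _ =>
      Submodule.smul_mem _ _ (Submodule.subset_span ⟨1, v i, rfl⟩)
  have hch : ((d.choose j : ℕ) : ℂ) ≠ 0 := by
    exact_mod_cast (Nat.choose_pos hj).ne'
  have hmem := hqmem ⟨j, by omega⟩
  simp only [hq] at hmem
  have h3 := Submodule.smul_mem _ (((d.choose j : ℕ) : ℂ)⁻¹) hmem
  rwa [smul_eq_C_mul, ← mul_assoc, ← C_mul, inv_mul_cancel₀ hch, C_1, one_mul] at h3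

lemma mem_Vspan_of_homog (d : ℕ) (f : MvPolynomial (Fin 2) ℂ) (hf : f.IsHomogeneous d) :
    f ∈ Vspan d := by
  classical
  rw [← support_sum_monomial_coeff f]
  refine Submodule.sum_mem _ fun m hm => ?_
  have hdeg : m 0 + m 1 = d := by
    have h1 := hf (mem_support_iff.1 hm)
    rw [← h1, Finsupp.weight_apply, Finsupp.sum_fintype _ _ (by simp), Fin.sum_univ_two]
    simp
  have hmono : (monomial m (coeff m f)) = C (coeff m f) * (X 0 ^ (m 0) * X 1 ^ (m 1)) := by
    rw [monomial_eq]
    congr 1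
    rw [Finsupp.prod_fintype _ _ (fun i => pow_zero _), Fin.prod_univ_two]
  rw [hmono, ← smul_eq_C_mul]
  have h1d : m 1 ≤ d := by omega
  have h0 : m 0 = d - m 1 := by omega
  rw [h0]
  exact Submodule.smul_mem _ _ (monomial_mem_Vspan d (m 1) h1d)

lemma exists_rep (d : ℕ) (f : MvPolynomial (Fin 2) ℂ) (hf : f ∈ Vspan d) :
    ∃ (N : ℕ) (lam A B : Fin N → ℂ), f = ∑ j, C (lam j) * lform (A j) (B j) ^ d := by
  classical
  obtain ⟨c, hsub, hsum⟩ := Submodule.mem_span_set.1 hf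
  set T := c.support with hT
  have hch : ∀ x : T, ∃ ab : ℂ × ℂ, (x : MvPolynomial (Fin 2) ℂ) = lform ab.1 ab.2 ^ d := by
    intro x
    obtain ⟨a, b, hab⟩ := hsub x.2
    exact ⟨(a, b), hab⟩
  choose ab hab using hch
  set e := T.equivFin with he
  refine ⟨T.card, fun j => c (e.symm j : MvPolynomial (Fin 2) ℂ),
    fun j => (ab (e.symm j)).1, fun j => (ab (e.symm j)).2, ?_⟩
  have : f = ∑ x : T, c (x : MvPolynomial (Fin 2) ℂ) • (x : MvPolynomial (Fin 2) ℂ) := by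
    rw [← hsum, Finsupp.sum]
    exact (Finset.sum_attach _ _).symm
  rw [this, ← Equiv.sum_comp e.symm
    (fun x : T => c (x : MvPolynomial (Fin 2) ℂ) • (x : MvPolynomial (Fin 2) ℂ))]
  refine Finset.sum_congr rfl fun j _ => ?_
  simp only [smul_eq_C_mul]
  rw [← hab (e.symm j)]

lemma lform_homog (a b : ℂ) : (lform a b).IsHomogeneous 1 := by
  have h1 : (C a * X 0 : MvPolynomial (Fin 2) ℂ).IsHomogeneous 1 := by
    simpa using (isHomogeneous_C _ a).mul (isHomogeneous_X _ 0)
  have h2 : (C b * X 1 : MvPolynomial (Fin 2) ℂ).IsHomogeneous 1 := by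
    simpa using (isHomogeneous_C _ b).mul (isHomogeneous_X _ 1)
  exact h1.add h2

lemma eval_lform (p : Fin 2 → ℂ) (x y : ℂ) : eval p (lform x y) = x * p 0 + y * p 1 := by
  simp [lform]

/-- **Lower bound for the Waring rank.** If `f = Π ℓᵢ^(mᵢ)` with at least two pairwise
nonproportional linear factors, then `L_ℂ(f) ≥ max mᵢ + 1`. -/
theorem rank_lower_bound (r : ℕ) (hr : 1 ≤ r)
    (a b : Fin (r + 1) → ℂ) (m : Fin (r + 1) → ℕ) (hm : ∀ i, 1 ≤ m i)
    (hdist : ∀ i j, i ≠ j → a i * b j - a j * b i ≠ 0)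
    (f : MvPolynomial (Fin 2) ℂ) (hf0 : f ≠ 0)
    (hf : f = ∏ i, lform (a i) (b i) ^ m i) :
    Finset.univ.sup m + 1 ≤ rankC (∑ i, m i) f := by
  classical
  set d : ℕ := ∑ i, m i with hd
  set M : ℕ := Finset.univ.sup m with hM
  -- f is homogeneous of degree d
  have hhom : f.IsHomogeneous d := by
    rw [hf]
    exact IsHomogeneous.prod _ _ _ fun i _ => by
      simpa using (lform_homog (a i) (b i)).pow (m i)
  -- the defining set is nonempty
  obtain ⟨N, lam0, A0, B0, hrep0⟩ := exists_rep d f (mem_Vspan_of_homog d f hhom)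
  rw [rankC]
  refine le_csInf ⟨N, lam0, A0, B0, hrep0⟩ ?_
  rintro s ⟨lam, A, B, hrep⟩
  by_contra hcon
  push_neg at hcon
  have hsM : s ≤ M := by omega
  -- pick the index with maximal multiplicity
  obtain ⟨i0, -, hi0⟩ := Finset.exists_mem_eq_sup Finset.univ univ_nonempty m
  -- a second index
  obtain ⟨j1, hj1⟩ : ∃ j1 : Fin (r + 1), j1 ≠ i0 := by
    by_cases h : i0 = 0
    · exact ⟨⟨1, by omega⟩, by simp [h, Fin.ext_iff]⟩
    · exact ⟨0, fun hh => h hh.symm⟩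
  have hl0ab : ¬(a i0 = 0 ∧ b i0 = 0) := by
    rintro ⟨h1, h2⟩
    exact hdist i0 j1 (Ne.symm hj1) (by rw [h1, h2]; ring)
  have hl0 : lform (a i0) (b i0) ≠ 0 := by
    intro h
    apply hl0ab
    constructor
    · have := congrArg (eval (fun k : Fin 2 => if k = 0 then 1 else 0)) h
      simpa [eval_lform] using this
    · have := congrArg (eval (fun k : Fin 2 => if k = 0 then 0 else 1)) h
      simpa [eval_lform] using this
  -- degree bounds
  have hMd : M + 1 ≤ d := by
    have h1 : m i0 + ∑ i ∈ Finset.univ.erase i0, m i = d :=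
      Finset.add_sum_erase _ m (Finset.mem_univ i0)
    have h2 : m j1 ≤ ∑ i ∈ Finset.univ.erase i0, m i :=
      Finset.single_le_sum (fun i _ => Nat.zero_le _)
        (Finset.mem_erase.2 ⟨hj1, Finset.mem_univ _⟩)
    have := hm j1
    omega
  -- factor out the top power
  set u : MvPolynomial (Fin 2) ℂ :=
    ∏ i ∈ Finset.univ.erase i0, lform (a i) (b i) ^ m i with hu
  have hfu : f = lform (a i0) (b i0) ^ M * u := by
    rw [hf, ← Finset.mul_prod_erase _ _ (Finset.mem_univ i0), ← hi0, ← hM, ← hu]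
  -- split the representation
  set e : Fin s → ℂ := fun j => if a i0 = 0 then B j / b i0 else A j / a i0 with he
  have hprop : ∀ j : Fin s, a i0 * B j - b i0 * A j = 0 →
      lform (A j) (B j) = C (e j) * lform (a i0) (b i0) := by
    intro j hj
    have hAB : A j = e j * a i0 ∧ B j = e j * b i0 := by
      by_cases h0 : a i0 = 0
      · have hb0 : b i0 ≠ 0 := fun hb => hl0ab ⟨h0, hb⟩
        have hA : A j = 0 := by
          have h2 : b i0 * A j = 0 := by linear_combination B j * h0 - hj
          rcases mul_eq_zero.1 h2 with h | h
          · exact absurd h hb0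
          · exact h
        constructor
        · rw [hA, h0, mul_zero]
        · rw [he]; simp [h0, div_mul_cancel₀ _ hb0]
      · constructor
        · rw [he]; simp [h0, div_mul_cancel₀ _ h0]
        · rw [he]
          simp only [h0, if_false]
          have h2 : A j * b i0 = B j * a i0 := by linear_combination -hj
          rw [div_mul_eq_mul_div, h2, mul_div_cancel_right₀ _ h0]
    rw [hAB.1, hAB.2, lform, lform, C_mul, C_mul]
    ring
  set Q : Finset (Fin s) := Finset.univ.filter (fun j => a i0 * B j - b i0 * A j ≠ 0) with hQ
  set c : ℂ := ∑ j ∈ Finset.univ.filter (fun j => ¬(a i0 * B j - b i0 * A j ≠ 0)),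
    lam j * e j ^ d with hc
  have hsplit : f = (∑ j ∈ Q, C (lam j) * lform (A j) (B j) ^ d)
      + C c * lform (a i0) (b i0) ^ d := by
    rw [hrep, ← Finset.sum_filter_add_sum_filter_not Finset.univ
      (fun j => a i0 * B j - b i0 * A j ≠ 0)]
    congr 1
    have step : ∀ j ∈ Finset.univ.filter (fun j => ¬(a i0 * B j - b i0 * A j ≠ 0)),
        C (lam j) * lform (A j) (B j) ^ d =
          C (lam j * e j ^ d) * lform (a i0) (b i0) ^ d := by
      intro j hj
      rw [hprop j (not_not.1 (Finset.mem_filter.1 hj).2), mul_pow, ← C_pow,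
        ← mul_assoc, ← C_mul]
    rw [Finset.sum_congr rfl step, ← Finset.sum_mul, hc, map_sum]
  -- the remainder after removing multiples of the top form
  set g : MvPolynomial (Fin 2) ℂ := f - C c * lform (a i0) (b i0) ^ d with hg
  have hgQ : g = ∑ j ∈ Q, C (lam j) * lform (A j) (B j) ^ d := by
    rw [hg, hsplit]; ring
  set v : MvPolynomial (Fin 2) ℂ := u - C c * lform (a i0) (b i0) ^ (d - M) with hv
  have hgl : g = lform (a i0) (b i0) ^ M * v := by
    have hdd : lform (a i0) (b i0) ^ d
        = lform (a i0) (b i0) ^ M * lform (a i0) (b i0) ^ (d - M) := by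
      rw [← pow_add]; congr 1; omega
    rw [hg, hfu, hv, hdd]; ring
  -- the annihilating operator
  set ops : List (ℂ × ℂ) := Q.toList.map (fun j => (A j, B j)) with hops
  have hlen : ops.length = Q.card := by simp [hops]
  have hQcard : Q.card ≤ M := by
    refine le_trans ?_ hsM
    have := Finset.card_filter_le (Finset.univ : Finset (Fin s))
      (fun j => a i0 * B j - b i0 * A j ≠ 0)
    simpa [hQ] using this
  have hcond : ∀ ab ∈ ops, a i0 * ab.2 - b i0 * ab.1 ≠ 0 := by
    intro ab hab
    obtain ⟨j, hjQ, rfl⟩ := List.mem_map.1 hab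
    exact (Finset.mem_filter.1 (Finset.mem_toList.1 hjQ)).2
  obtain ⟨c', w, hc', hkey⟩ := applyOps_key (a i0) (b i0) v ops M
    (by rw [hlen]; exact hQcard) hcond
  have hzero : applyOps ops g = 0 := by
    rw [hgQ, applyOps_sum]
    refine Finset.sum_eq_zero fun j hjQ => ?_
    exact applyOps_kill (A j) (B j) ops
      (List.mem_map_of_mem (f := fun j => (A j, B j)) (Finset.mem_toList.2 hjQ)) (lam j) d
  rw [hgl, hkey] at hzero
  have heq : lform (a i0) (b i0) ^ (M - ops.length)
      * (C c' * v + lform (a i0) (b i0) * w) = 0 := by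
    rw [← hzero]; ring
  have h2 : C c' * v + lform (a i0) (b i0) * w = 0 := by
    rcases mul_eq_zero.1 heq with h | h
    · exact absurd h (pow_ne_zero _ hl0)
    · exact h
  -- evaluate at a zero of the top form
  set p : Fin 2 → ℂ := fun k => if k = 0 then -(b i0) else a i0 with hp
  have hevl : eval p (lform (a i0) (b i0)) = 0 := by
    rw [eval_lform]; simp [hp]; ring
  have h3 := congrArg (eval p) h2
  rw [map_add, map_mul, map_mul, eval_C, hevl, map_zero, zero_mul, add_zero] at h3
  have hv0 : eval p v = 0 := by
    rcases mul_eq_zero.1 h3 with h | h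
    · exact absurd h hc'
    · exact h
  have hu0 : eval p u = 0 := by
    rw [hv, map_sub, map_mul, eval_C, map_pow, hevl, zero_pow (by omega : d - M ≠ 0),
      mul_zero, sub_zero] at hv0
    exact hv0
  have hune : eval p u ≠ 0 := by
    rw [hu, map_prod]
    refine Finset.prod_ne_zero_iff.2 fun i hi => ?_
    rw [map_pow, eval_lform]
    refine pow_ne_zero _ ?_
    have hne : i0 ≠ i := (Finset.mem_erase.1 hi).1.symm
    have := hdist i0 i hne
    have hp0 : p 0 = -(b i0) := by simp [hp]
    have hp1 : p 1 = a i0 := by simp [hp]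
    rw [hp0, hp1]
    intro hcontra
    exact this (by linear_combination hcontra)
  exact hune hu0
end

section
/- Let f(x,y) ∈ ℂ[x,y] be a binary form of degree d ≥ m+1 of the shape f(x,y) = y^m g(x,y) with m ≥ 1 and y ∤ g(x,y). Then every binary form h of degree m with h(D)f = 0 is divisible by x^2; in particular, no form in (f^⊥)_m is square-free and f admits no representation as a sum of m d-th powers of linear forms. -/
open MvPolynomial Finset

namespace ApolarAux

noncomputable def Dop (μ : Fin 2 →₀ ℕ) (p : MvPolynomial (Fin 2) ℂ) : MvPolynomial (Fin 2) ℂ :=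
  (pd 0)^[μ 0] ((pd 1)^[μ 1] p)

lemma pd_add (i : Fin 2) (p q : MvPolynomial (Fin 2) ℂ) : pd i (p + q) = pd i p + pd i q := by
  simp [pd]

lemma pd_smul (i : Fin 2) (c : ℂ) (p : MvPolynomial (Fin 2) ℂ) : pd i (c • p) = c • pd i p := by
  simp [pd]

lemma pd_zero (i : Fin 2) : pd i 0 = 0 := by simp [pd]

lemma pd_iter_add (i : Fin 2) (k : ℕ) (p q : MvPolynomial (Fin 2) ℂ) :
    (pd i)^[k] (p + q) = (pd i)^[k] p + (pd i)^[k] q := by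
  induction k generalizing p q with
  | zero => simp
  | succ k ih => simp [Function.iterate_succ_apply, pd_add, ih]

lemma pd_iter_smul (i : Fin 2) (k : ℕ) (c : ℂ) (p : MvPolynomial (Fin 2) ℂ) :
    (pd i)^[k] (c • p) = c • (pd i)^[k] p := by
  induction k generalizing p with
  | zero => simp
  | succ k ih => simp [Function.iterate_succ_apply, pd_smul, ih]

lemma pd_iter_zero (i : Fin 2) (k : ℕ) : (pd i)^[k] (0 : MvPolynomial (Fin 2) ℂ) = 0 := by
  induction k with
  | zero => simp
  | succ k ih => simp [Function.iterate_succ_apply, pd_zero, ih]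

lemma Dop_add (μ : Fin 2 →₀ ℕ) (p q : MvPolynomial (Fin 2) ℂ) :
    Dop μ (p + q) = Dop μ p + Dop μ q := by
  simp [Dop, pd_iter_add]

lemma Dop_smul (μ : Fin 2 →₀ ℕ) (c : ℂ) (p : MvPolynomial (Fin 2) ℂ) :
    Dop μ (c • p) = c • Dop μ p := by
  simp [Dop, pd_iter_smul]

lemma Dop_zero (μ : Fin 2 →₀ ℕ) : Dop μ (0 : MvPolynomial (Fin 2) ℂ) = 0 := by
  simp [Dop, pd_iter_zero]

lemma pd_comm (p : MvPolynomial (Fin 2) ℂ) : pd 0 (pd 1 p) = pd 1 (pd 0 p) := by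
  induction p using MvPolynomial.induction_on' with
  | monomial s a =>
    simp only [pd, pderiv_monomial]
    rw [tsub_right_comm]
    congr 1
    have h0 : (s - Finsupp.single (1 : Fin 2) 1 : Fin 2 →₀ ℕ) 0 = s 0 := by
      rw [Finsupp.tsub_apply]
      simp [Finsupp.single_apply]
    have h1 : (s - Finsupp.single (0 : Fin 2) 1 : Fin 2 →₀ ℕ) 1 = s 1 := by
      rw [Finsupp.tsub_apply]
      simp [Finsupp.single_apply]
    rw [h0, h1]; ring
  | add p q hp hq => simp [pd_add, hp, hq]

lemma pd_iter_comm (k l : ℕ) (p : MvPolynomial (Fin 2) ℂ) :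
    (pd 0)^[k] ((pd 1)^[l] p) = (pd 1)^[l] ((pd 0)^[k] p) :=
  (Function.Commute.iterate_iterate (fun q => (pd_comm q)) k l) p

lemma Dop_add_index (μ ν : Fin 2 →₀ ℕ) (p : MvPolynomial (Fin 2) ℂ) :
    Dop (μ + ν) p = Dop μ (Dop ν p) := by
  simp only [Dop, Finsupp.add_apply, Function.iterate_add_apply]
  congr 1
  rw [pd_iter_comm]

lemma apolar_def (h p : MvPolynomial (Fin 2) ℂ) :
    apolar h p = ∑ μ ∈ h.support, h.coeff μ • Dop μ p := rfl

lemma apolar_def' (h p : MvPolynomial (Fin 2) ℂ) (s : Finset (Fin 2 →₀ ℕ)) (hs : h.support ⊆ s) :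
    apolar h p = ∑ μ ∈ s, h.coeff μ • Dop μ p := by
  rw [apolar_def]
  exact Finset.sum_subset hs (fun μ _ hμ => by
    rw [MvPolynomial.notMem_support_iff.mp hμ, zero_smul])

lemma apolar_add_left (h₁ h₂ p : MvPolynomial (Fin 2) ℂ) :
    apolar (h₁ + h₂) p = apolar h₁ p + apolar h₂ p := by
  classical
  rw [apolar_def' (h₁ + h₂) p (h₁.support ∪ h₂.support) (MvPolynomial.support_add),
    apolar_def' h₁ p (h₁.support ∪ h₂.support) Finset.subset_union_left,
    apolar_def' h₂ p (h₁.support ∪ h₂.support) Finset.subset_union_right,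
    ← Finset.sum_add_distrib]
  refine Finset.sum_congr rfl fun μ _ => ?_
  rw [MvPolynomial.coeff_add, add_smul]

lemma apolar_monomial (μ : Fin 2 →₀ ℕ) (c : ℂ) (p : MvPolynomial (Fin 2) ℂ) :
    apolar (monomial μ c) p = c • Dop μ p := by
  classical
  rcases eq_or_ne c 0 with rfl | hc
  · simp [apolar_def, support_monomial]
  · rw [apolar_def, support_monomial, if_neg hc, Finset.sum_singleton, coeff_monomial, if_pos rfl]

lemma apolar_add_right (h p q : MvPolynomial (Fin 2) ℂ) :
    apolar h (p + q) = apolar h p + apolar h q := by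
  simp [apolar_def, Dop_add, smul_add, Finset.sum_add_distrib]

lemma apolar_smul_right (h : MvPolynomial (Fin 2) ℂ) (c : ℂ) (p : MvPolynomial (Fin 2) ℂ) :
    apolar h (c • p) = c • apolar h p := by
  simp only [apolar_def, Dop_smul, Finset.smul_sum]
  exact Finset.sum_congr rfl fun μ _ => smul_comm _ _ _

lemma apolar_zero_right (h : MvPolynomial (Fin 2) ℂ) : apolar h 0 = 0 := by
  simp [apolar_def, Dop_zero]

lemma apolar_sum_right {ι : Type*} (h : MvPolynomial (Fin 2) ℂ) (s : Finset ι)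
    (p : ι → MvPolynomial (Fin 2) ℂ) :
    apolar h (∑ j ∈ s, p j) = ∑ j ∈ s, apolar h (p j) := by
  classical
  induction s using Finset.induction_on with
  | empty => simp [apolar_zero_right]
  | insert j s hj ih => rw [Finset.sum_insert hj, Finset.sum_insert hj, apolar_add_right, ih]

lemma apolar_mul (h₁ h₂ p : MvPolynomial (Fin 2) ℂ) :
    apolar (h₁ * h₂) p = apolar h₁ (apolar h₂ p) := by
  induction h₁ using MvPolynomial.induction_on' generalizing h₂ with
  | add a b iha ihb => rw [add_mul, apolar_add_left, iha, ihb, apolar_add_left]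
  | monomial μ c =>
    induction h₂ using MvPolynomial.induction_on' with
    | add a b iha ihb =>
      rw [mul_add, apolar_add_left, iha, ihb, apolar_add_left, apolar_add_right]
    | monomial ν e =>
      rw [monomial_mul, apolar_monomial, apolar_monomial, apolar_monomial, Dop_add_index,
        Dop_smul, smul_smul]

lemma coeff_pderiv (i : Fin 2) (ν : Fin 2 →₀ ℕ) (p : MvPolynomial (Fin 2) ℂ) :
    coeff ν (pd i p) = ((ν i : ℂ) + 1) * coeff (ν + Finsupp.single i 1) p := by
  induction p using MvPolynomial.induction_on' with
  | add p q hp hq => simp [pd_add, hp, hq, mul_add]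
  | monomial s a =>
    simp only [pd, pderiv_monomial, coeff_monomial]
    by_cases hs : s i = 0
    · have h1 : ¬ s = ν + Finsupp.single i 1 := fun h => by
        apply absurd hs
        rw [h]; simp
      rw [if_neg h1, mul_zero, hs]
      split <;> simp
    · have hiff : s - Finsupp.single i 1 = ν ↔ s = ν + Finsupp.single i 1 := by
        constructor
        · rintro rfl
          ext j
          rcases eq_or_ne j i with rfl | hj
          · simp only [Finsupp.add_apply, Finsupp.tsub_apply, Finsupp.single_eq_same]
            omega
          · simp [Finsupp.tsub_apply, Finsupp.single_apply, Ne.symm hj]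
        · rintro rfl
          ext j
          rw [Finsupp.tsub_apply, Finsupp.add_apply]
          omega
      by_cases hν : s = ν + Finsupp.single i 1
      · rw [if_pos (hiff.mpr hν), if_pos hν]
        have hsi : s i = ν i + 1 := by rw [hν]; simp
        rw [hsi]
        push_cast
        ring
      · rw [if_neg (fun h => hν (hiff.mp h)), if_neg hν, mul_zero]

lemma coeff_pd_iter (i : Fin 2) (k : ℕ) (ν : Fin 2 →₀ ℕ) (p : MvPolynomial (Fin 2) ℂ) :
    coeff ν ((pd i)^[k] p) =
      ((∏ t ∈ Finset.range k, (ν i + t + 1) : ℕ) : ℂ) * coeff (ν + Finsupp.single i k) p := by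
  induction k generalizing p with
  | zero => simp
  | succ k ih =>
    rw [Function.iterate_succ_apply, ih, coeff_pderiv]
    have h1 : (ν + Finsupp.single i k) i = ν i + k := by simp
    have h2 : ν + Finsupp.single i k + Finsupp.single i 1 = ν + Finsupp.single i (k + 1) := by
      rw [add_assoc, ← Finsupp.single_add]
    rw [h1, h2, Finset.prod_range_succ]
    push_cast
    ring

lemma single_fin2 (μ : Fin 2 →₀ ℕ) :
    Finsupp.single (0 : Fin 2) (μ 0) + Finsupp.single (1 : Fin 2) (μ 1) = μ := by
  ext j
  fin_cases j <;> simp [Finsupp.single_apply]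

lemma coeff_Dop (μ ν : Fin 2 →₀ ℕ) (p : MvPolynomial (Fin 2) ℂ) :
    ∃ K : ℕ, 0 < K ∧ coeff ν (Dop μ p) = (K : ℂ) * coeff (ν + μ) p := by
  refine ⟨(∏ t ∈ Finset.range (μ 0), (ν 0 + t + 1)) *
    (∏ t ∈ Finset.range (μ 1), ((ν + Finsupp.single (0 : Fin 2) (μ 0)) 1 + t + 1)),
    Nat.mul_pos (Finset.prod_pos fun t _ => by omega) (Finset.prod_pos fun t _ => by omega), ?_⟩
  rw [Dop, coeff_pd_iter, coeff_pd_iter]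
  have : ν + Finsupp.single (0 : Fin 2) (μ 0) + Finsupp.single (1 : Fin 2) (μ 1) = ν + μ := by
    rw [add_assoc, single_fin2]
  rw [this]
  push_cast
  ring

end ApolarAux

namespace ApolarAux

lemma finsupp_fin2_ext {σ τ : Fin 2 →₀ ℕ} (h0 : σ 0 = τ 0) (h1 : σ 1 = τ 1) : σ = τ := by
  ext j
  fin_cases j
  · exact h0
  · exact h1

lemma s00 (n : ℕ) : (Finsupp.single (0 : Fin 2) n) 0 = n := Finsupp.single_eq_same
lemma s01 (n : ℕ) : (Finsupp.single (0 : Fin 2) n) 1 = 0 := Finsupp.single_eq_of_ne (by decide)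
lemma s10 (n : ℕ) : (Finsupp.single (1 : Fin 2) n) 0 = 0 := Finsupp.single_eq_of_ne (by decide)
lemma s11 (n : ℕ) : (Finsupp.single (1 : Fin 2) n) 1 = n := Finsupp.single_eq_same

lemma degree_fin2 (σ : Fin 2 →₀ ℕ) : σ.degree = σ 0 + σ 1 := by
  rw [Finsupp.degree_apply, Finset.sum_subset (Finset.subset_univ σ.support)
    (fun i _ hi => Finsupp.notMem_support_iff.mp hi)]
  exact Fin.sum_univ_two σ

lemma support_degree {h : MvPolynomial (Fin 2) ℂ} {m : ℕ} (hh : h.IsHomogeneous m)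
    {μ : Fin 2 →₀ ℕ} (hμ : μ ∈ h.support) : μ 0 + μ 1 = m := by
  rw [← degree_fin2]
  by_contra hne
  exact (MvPolynomial.mem_support_iff.mp hμ) (hh.coeff_eq_zero hne)

lemma key (m d : ℕ) (hm : 1 ≤ m) (hd : m + 1 ≤ d) (g : MvPolynomial (Fin 2) ℂ)
    (hg : g.IsHomogeneous (d - m)) (hgy : ¬ (X 1 : MvPolynomial (Fin 2) ℂ) ∣ g) :
    ∀ h : MvPolynomial (Fin 2) ℂ, h.IsHomogeneous m → apolar h (X 1 ^ m * g) = 0 →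
      (X 0 : MvPolynomial (Fin 2) ℂ) ^ 2 ∣ h := by
  intro h hh hap
  -- the distinguished nonzero coefficient of g
  have hA : coeff (Finsupp.single (0 : Fin 2) (d - m)) g ≠ 0 := by
    intro hA0
    apply hgy
    rw [g.as_sum]
    apply Finset.dvd_sum
    intro σ hσ
    rw [X_dvd_monomial]
    right
    intro hσ1
    have hdeg := support_degree hg hσ
    have hσeq : σ = Finsupp.single (0 : Fin 2) (d - m) := by
      refine finsupp_fin2_ext ?_ ?_
      · rw [s00]; omega
      · rw [s01]; omega
    rw [hσeq] at hσ
    exact (MvPolynomial.mem_support_iff.mp hσ) hA0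
  have coeff_f : ∀ σ : Fin 2 →₀ ℕ, coeff σ ((X 1 : MvPolynomial (Fin 2) ℂ) ^ m * g) =
      if Finsupp.single (1 : Fin 2) m ≤ σ then coeff (σ - Finsupp.single (1 : Fin 2) m) g
      else 0 := by
    intro σ
    rw [X_pow_eq_monomial, coeff_monomial_mul']
    split_ifs <;> simp
  have coeff_f_low : ∀ σ : Fin 2 →₀ ℕ, σ 1 < m →
      coeff σ ((X 1 : MvPolynomial (Fin 2) ℂ) ^ m * g) = 0 := by
    intro σ hσ
    rw [coeff_f, if_neg]
    intro hle
    exact absurd (Finsupp.single_le_iff.mp hle) (by omega)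
  have hcf : coeff (Finsupp.single (0 : Fin 2) (d - m) + Finsupp.single (1 : Fin 2) m)
      ((X 1 : MvPolynomial (Fin 2) ℂ) ^ m * g) =
      coeff (Finsupp.single (0 : Fin 2) (d - m)) g := by
    rw [coeff_f, if_pos]
    · congr 1
      refine finsupp_fin2_ext ?_ ?_
      · simp only [Finsupp.tsub_apply, Finsupp.add_apply, s00, s01, s10, s11]
        omega
      · simp only [Finsupp.tsub_apply, Finsupp.add_apply, s00, s01, s10, s11]
        omega
    · rw [Finsupp.single_le_iff, Finsupp.add_apply, s01, s11]
      omega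
  have main : ∀ ν : Fin 2 →₀ ℕ,
      ∑ μ ∈ h.support, coeff μ h * coeff ν (Dop μ ((X 1 : MvPolynomial (Fin 2) ℂ) ^ m * g)) = 0 := by
    intro ν
    have hco := congrArg (coeff ν) hap
    rw [apolar_def, MvPolynomial.coeff_sum] at hco
    simpa [MvPolynomial.coeff_smul, smul_eq_mul] using hco
  -- Step A : the coefficient of y^m in h vanishes
  have stepA : coeff (Finsupp.single (1 : Fin 2) m) h = 0 := by
    have h0 := main (Finsupp.single (0 : Fin 2) (d - m))
    have hred : ∑ μ ∈ h.support, coeff μ h *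
        coeff (Finsupp.single (0 : Fin 2) (d - m)) (Dop μ ((X 1 : MvPolynomial (Fin 2) ℂ) ^ m * g)) =
        coeff (Finsupp.single (1 : Fin 2) m) h *
        coeff (Finsupp.single (0 : Fin 2) (d - m))
          (Dop (Finsupp.single (1 : Fin 2) m) ((X 1 : MvPolynomial (Fin 2) ℂ) ^ m * g)) := by
      apply Finset.sum_eq_single
      · intro μ hμ hne
        obtain ⟨K, hK, hKe⟩ := coeff_Dop μ (Finsupp.single (0 : Fin 2) (d - m))
          ((X 1 : MvPolynomial (Fin 2) ℂ) ^ m * g)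
        rw [hKe]
        have hμd := support_degree hh hμ
        have hμ1 : μ 1 < m := by
          rcases Nat.lt_or_ge (μ 1) m with hlt | hge
          · exact hlt
          · exfalso
            apply hne
            refine finsupp_fin2_ext ?_ ?_
            · rw [s10]; omega
            · rw [s11]; omega
        have hzero : coeff (Finsupp.single (0 : Fin 2) (d - m) + μ)
            ((X 1 : MvPolynomial (Fin 2) ℂ) ^ m * g) = 0 := by
          apply coeff_f_low
          rw [Finsupp.add_apply, s01]
          omega
        rw [hzero, mul_zero, mul_zero]
      · intro hnot
        rw [MvPolynomial.notMem_support_iff.mp hnot, zero_mul]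
    rw [hred] at h0
    obtain ⟨K, hK, hKe⟩ := coeff_Dop (Finsupp.single (1 : Fin 2) m)
      (Finsupp.single (0 : Fin 2) (d - m)) ((X 1 : MvPolynomial (Fin 2) ℂ) ^ m * g)
    rw [hKe, hcf] at h0
    have hne : (K : ℂ) * coeff (Finsupp.single (0 : Fin 2) (d - m)) g ≠ 0 :=
      mul_ne_zero (Nat.cast_ne_zero.mpr hK.ne') hA
    exact (mul_eq_zero.mp h0).resolve_right hne
  -- Step B : the coefficient of x y^(m-1) in h vanishes
  have stepB : coeff (Finsupp.single (0 : Fin 2) 1 + Finsupp.single (1 : Fin 2) (m - 1)) h = 0 := by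
    set νB : Fin 2 →₀ ℕ := Finsupp.single (0 : Fin 2) (d - m - 1) + Finsupp.single (1 : Fin 2) 1
      with hνB
    set μB : Fin 2 →₀ ℕ := Finsupp.single (0 : Fin 2) 1 + Finsupp.single (1 : Fin 2) (m - 1)
      with hμB
    have hνB0 : νB 0 = d - m - 1 := by
      simp only [hνB, Finsupp.add_apply, s00, s01, s10, s11]
      omega
    have hνB1 : νB 1 = 1 := by
      simp only [hνB, Finsupp.add_apply, s00, s01, s10, s11]
    have hμB0 : μB 0 = 1 := by
      simp only [hμB, Finsupp.add_apply, s00, s01, s10, s11]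
    have hμB1 : μB 1 = m - 1 := by
      simp only [hμB, Finsupp.add_apply, s00, s01, s10, s11]
      omega
    have h0 := main νB
    have hred : ∑ μ ∈ h.support, coeff μ h *
        coeff νB (Dop μ ((X 1 : MvPolynomial (Fin 2) ℂ) ^ m * g)) =
        coeff μB h * coeff νB (Dop μB ((X 1 : MvPolynomial (Fin 2) ℂ) ^ m * g)) := by
      apply Finset.sum_eq_single
      · intro μ hμ hne
        obtain ⟨K, hK, hKe⟩ := coeff_Dop μ νB ((X 1 : MvPolynomial (Fin 2) ℂ) ^ m * g)
        rw [hKe]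
        have hμd := support_degree hh hμ
        by_cases hc1 : μ 1 = m
        · have hμeq : μ = Finsupp.single (1 : Fin 2) m := by
            refine finsupp_fin2_ext ?_ ?_
            · rw [s10]; omega
            · rw [s11]; omega
          rw [hμeq, stepA, zero_mul]
        · by_cases hc2 : μ 1 = m - 1
          · exfalso
            apply hne
            refine finsupp_fin2_ext ?_ ?_
            · rw [hμB0]; omega
            · rw [hμB1]; omega
          · have hzero : coeff (νB + μ) ((X 1 : MvPolynomial (Fin 2) ℂ) ^ m * g) = 0 := by
              apply coeff_f_low
              rw [Finsupp.add_apply, hνB1]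
              omega
            rw [hzero, mul_zero, mul_zero]
      · intro hnot
        rw [MvPolynomial.notMem_support_iff.mp hnot, zero_mul]
    rw [hred] at h0
    obtain ⟨K, hK, hKe⟩ := coeff_Dop μB νB ((X 1 : MvPolynomial (Fin 2) ℂ) ^ m * g)
    have hidx : νB + μB = Finsupp.single (0 : Fin 2) (d - m) + Finsupp.single (1 : Fin 2) m := by
      refine finsupp_fin2_ext ?_ ?_
      · simp only [hνB, hμB, Finsupp.add_apply, s00, s01, s10, s11]
        omega
      · simp only [hνB, hμB, Finsupp.add_apply, s00, s01, s10, s11]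
        omega
    rw [hKe, hidx, hcf] at h0
    have hne : (K : ℂ) * coeff (Finsupp.single (0 : Fin 2) (d - m)) g ≠ 0 :=
      mul_ne_zero (Nat.cast_ne_zero.mpr hK.ne') hA
    exact (mul_eq_zero.mp h0).resolve_right hne
  -- conclude
  rw [h.as_sum]
  apply Finset.dvd_sum
  intro μ hμ
  have hμd := support_degree hh hμ
  have hμ0 : 2 ≤ μ 0 := by
    by_contra hlt
    push_neg at hlt
    rcases (by omega : μ 0 = 0 ∨ μ 0 = 1) with h0 | h1
    · have hμeq : μ = Finsupp.single (1 : Fin 2) m := by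
        refine finsupp_fin2_ext ?_ ?_
        · rw [s10]; omega
        · rw [s11]; omega
      rw [hμeq] at hμ
      exact (MvPolynomial.mem_support_iff.mp hμ) stepA
    · have hμeq : μ = Finsupp.single (0 : Fin 2) 1 + Finsupp.single (1 : Fin 2) (m - 1) := by
        refine finsupp_fin2_ext ?_ ?_
        · simp only [Finsupp.add_apply, s00, s01, s10, s11]; omega
        · simp only [Finsupp.add_apply, s00, s01, s10, s11]; omega
      rw [hμeq] at hμ
      exact (MvPolynomial.mem_support_iff.mp hμ) stepB
  rw [X_pow_eq_monomial, monomial_dvd_monomial]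
  exact ⟨Or.inr (Finsupp.single_le_iff.mpr hμ0), one_dvd _⟩

end ApolarAux

namespace ApolarAux

lemma Dop_single (i : Fin 2) (p : MvPolynomial (Fin 2) ℂ) :
    Dop (Finsupp.single i 1) p = pd i p := by
  fin_cases i
  · simp [Dop, s00, s01]
  · simp [Dop, s10, s11]

lemma apolar_C_mul_X (c : ℂ) (i : Fin 2) (p : MvPolynomial (Fin 2) ℂ) :
    apolar (C c * X i) p = c • pd i p := by
  have hx : (X i : MvPolynomial (Fin 2) ℂ) = monomial (Finsupp.single i 1) 1 := by
    rw [← X_pow_eq_monomial, pow_one]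
  rw [hx, C_mul_monomial, mul_one, apolar_monomial, Dop_single]

lemma apolar_X (i : Fin 2) (p : MvPolynomial (Fin 2) ℂ) : apolar (X i) p = pd i p := by
  have := apolar_C_mul_X 1 i p
  rwa [map_one, one_mul, one_smul] at this

lemma pd_lform_pow (i : Fin 2) (a b : ℂ) (k : ℕ) :
    pd i (lform a b ^ k) = (k : MvPolynomial (Fin 2) ℂ) * lform a b ^ (k - 1) *
      (if i = 0 then C a else C b) := by
  rw [pd, pderiv_pow]
  congr 1
  fin_cases i
  · simp [lform, pderiv_X]
  · simp [lform, pderiv_X]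

lemma dual_kills (a b : ℂ) (k : ℕ) :
    apolar (C b * X 0 + C (-a) * X 1) (lform a b ^ k) = 0 := by
  rw [apolar_add_left, apolar_C_mul_X, apolar_C_mul_X, pd_lform_pow, pd_lform_pow]
  have h0 : (if (0 : Fin 2) = 0 then C a else C b) = (C a : MvPolynomial (Fin 2) ℂ) := if_pos rfl
  have h1 : (if (1 : Fin 2) = 0 then C a else C b) = (C b : MvPolynomial (Fin 2) ℂ) :=
    if_neg (by decide)
  rw [h0, h1, MvPolynomial.smul_eq_C_mul, MvPolynomial.smul_eq_C_mul, map_neg]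
  ring

lemma pd0_kills (b : ℂ) (k : ℕ) : pd 0 (lform 0 b ^ k) = 0 := by
  rw [pd_lform_pow]
  simp

end ApolarAux


open ApolarAux

/-- If `f = y^m g` with `y ∤ g` (and `deg f = d ≥ m + 1`), then every degree-`m` form
apolar to `f` is divisible by `x²`; in particular `f` is not a sum of `m` `d`-th powers
of linear forms. -/
theorem apolar_divisible_sq (m d : ℕ) (hm : 1 ≤ m) (hd : m + 1 ≤ d)
    (g f : MvPolynomial (Fin 2) ℂ) (hg : g.IsHomogeneous (d - m))
    (hgy : ¬ (X 1 : MvPolynomial (Fin 2) ℂ) ∣ g)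
    (hf : f = X 1 ^ m * g) :
    (∀ h : MvPolynomial (Fin 2) ℂ, h.IsHomogeneous m → apolar h f = 0 →
      (X 0 : MvPolynomial (Fin 2) ℂ) ^ 2 ∣ h) ∧
    ¬ ∃ lam a b : Fin m → ℂ, f = ∑ j, C (lam j) * lform (a j) (b j) ^ d := by
  subst hf
  have part1 := ApolarAux.key m d hm hd g hg hgy
  refine ⟨part1, ?_⟩
  rintro ⟨lam, a, b, hrep⟩
  classical
  set v : Fin 2 → ℂ := fun i => if i = 0 then 0 else 1 with hv
  have hv0 : v 0 = 0 := if_pos rfl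
  have hv1 : v 1 = 1 := if_neg (by decide)
  set T : Finset (Fin m) := Finset.univ.filter (fun j => a j ≠ 0) with hT
  set P : MvPolynomial (Fin 2) ℂ := ∏ j ∈ T, (C (b j) * X 0 + C (-(a j)) * X 1) with hP
  have hTcard : T.card ≤ m := le_trans (Finset.card_filter_le _ _) (by simp)
  have hdualhom : ∀ j : Fin m,
      ((C (b j) * X 0 + C (-(a j)) * X 1 : MvPolynomial (Fin 2) ℂ)).IsHomogeneous 1 :=
    fun j => (isHomogeneous_C_mul_X _ 0).add (isHomogeneous_C_mul_X _ 1)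
  have hPhom : P.IsHomogeneous T.card := by
    have := MvPolynomial.IsHomogeneous.prod T
      (fun j => (C (b j) * X 0 + C (-(a j)) * X 1 : MvPolynomial (Fin 2) ℂ))
      (fun _ => 1) (fun j _ => hdualhom j)
    simpa only [Finset.sum_const, smul_eq_mul, mul_one] using this
  have hPkill : ∀ j ∈ T, apolar P (lform (a j) (b j) ^ d) = 0 := by
    intro j hj
    rw [hP, ← Finset.prod_erase_mul T _ hj, apolar_mul, dual_kills, apolar_zero_right]
  have hPeval : eval v P ≠ 0 := by
    rw [hP, map_prod]
    rw [Finset.prod_ne_zero_iff]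
    intro j hj
    have : eval v (C (b j) * X 0 + C (-(a j)) * X 1) = -(a j) := by
      simp [eval_C, eval_X, hv0, hv1]
    rw [this, neg_ne_zero]
    exact (Finset.mem_filter.mp hj).2
  rcases eq_or_lt_of_le hTcard with htm | htm
  -- case T.card = m : T = univ
  · have hTuniv : T = Finset.univ := by
      apply Finset.eq_univ_of_card
      rw [htm, Fintype.card_fin]
    have hPhom' : P.IsHomogeneous m := htm ▸ hPhom
    have hap : apolar P (X 1 ^ m * g) = 0 := by
      rw [hrep, apolar_sum_right]
      apply Finset.sum_eq_zero
      intro j _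
      rw [← MvPolynomial.smul_eq_C_mul, apolar_smul_right,
        hPkill j (hTuniv ▸ Finset.mem_univ j), smul_zero]
    obtain ⟨q, hq⟩ := part1 P hPhom' hap
    apply hPeval
    rw [hq]
    simp [hv0]
  -- case T.card < m
  · set e1 : ℕ := m - T.card - 1 with he1
    set h : MvPolynomial (Fin 2) ℂ := X 0 * (X 1 ^ e1 * P) with hh
    have hhom : h.IsHomogeneous m := by
      have h1 : (X 1 ^ e1 * P : MvPolynomial (Fin 2) ℂ).IsHomogeneous (e1 + T.card) :=
        (isHomogeneous_X_pow _ _).mul hPhom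
      have h2 : h.IsHomogeneous (1 + (e1 + T.card)) := (isHomogeneous_X _ _).mul h1
      have : 1 + (e1 + T.card) = m := by omega
      rwa [this] at h2
    have hap : apolar h (X 1 ^ m * g) = 0 := by
      rw [hrep, apolar_sum_right]
      apply Finset.sum_eq_zero
      intro j _
      rw [← MvPolynomial.smul_eq_C_mul, apolar_smul_right]
      by_cases hj : j ∈ T
      · have hfac : h = ((X 0 * X 1 ^ e1) * ∏ j' ∈ T.erase j,
            (C (b j') * X 0 + C (-(a j')) * X 1)) * (C (b j) * X 0 + C (-(a j)) * X 1) := by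
          rw [hh, hP, ← Finset.prod_erase_mul T _ hj]
          ring
        rw [hfac, apolar_mul, dual_kills, apolar_zero_right, smul_zero]
      · have haj : a j = 0 := by
          by_contra hne
          exact hj (Finset.mem_filter.mpr ⟨Finset.mem_univ j, hne⟩)
        have hfac : h = (X 1 ^ e1 * P) * X 0 := by rw [hh]; ring
        rw [hfac, apolar_mul, apolar_X, haj, pd0_kills, apolar_zero_right, smul_zero]
    obtain ⟨q, hq⟩ := part1 h hhom hap
    have hq' : X 1 ^ e1 * P = X 0 * q := by
      apply mul_left_cancel₀ (MvPolynomial.X_ne_zero (0 : Fin 2))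
      rw [← hh, hq]
      ring
    apply hPeval
    have := congrArg (eval v) hq'
    rw [map_mul, map_mul, eval_X, hv0, zero_mul, map_pow, eval_X, hv1, one_pow, one_mul] at this
    exact this
end
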